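/- arXiv:2103.10536 — 9 statements merged into one kernel-verified Lean document; each statement's English description precedes it below -/
import Mathlib

section
/- Let v be a submodular set function on a finite ground set G and let V be its multilinear extension. Then V is concave along any line with nonnegative direction: for all x ∈ [0,1]^G, all d ∈ ℝ^G with d ≥ 0 componentwise, all s, t ≥ 0 with x + s·d, x + t·d ∈ [0,1]^G, and all λ ∈ [0,1], V(x + (λs + (1−λ)t)·d) ≥ λ·V(x + s·d) + (1−λ)·V(x + t·d). -/
open Finset

/-- A set function `v` on a finite ground set is submodular if
`v(S ∩ T) + v(S ∪ T) ≤ v(S) + v(T)` for all `S, T`. -/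
def Submodular {G : Type*} [DecidableEq G] (v : Finset G → ℝ) : Prop :=
  ∀ S T : Finset G, v (S ∩ T) + v (S ∪ T) ≤ v S + v T

/-- The multilinear extension of a set function `v` on a finite ground set `G`. -/
noncomputable def multilinear {G : Type*} [Fintype G] [DecidableEq G]
    (v : Finset G → ℝ) (x : G → ℝ) : ℝ :=
  ∑ S : Finset G, v S * ((∏ j ∈ S, x j) * ∏ j ∈ Sᶜ, (1 - x j))

section Aux

variable {G : Type*} [Fintype G] [DecidableEq G]

/-- Auxiliary: the `k`-th factor of the `S`-term of the multilinear extension along the line. -/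
noncomputable def mlff (x d : G → ℝ) (S : Finset G) (u : ℝ) (k : G) : ℝ :=
  if k ∈ S then x k + u * d k else 1 - (x k + u * d k)

/-- Auxiliary: derivative of `mlff` in `u`. -/
noncomputable def mlee (d : G → ℝ) (S : Finset G) (k : G) : ℝ :=
  if k ∈ S then d k else -d k

/-- The multilinear extension restricted to the line, in product form. -/
noncomputable def mlF (v : Finset G → ℝ) (x d : G → ℝ) (u : ℝ) : ℝ :=
  ∑ S : Finset G, v S * ∏ k : G, mlff x d S u k

/-- First derivative of `mlF`. -/
noncomputable def mlF1 (v : Finset G → ℝ) (x d : G → ℝ) (u : ℝ) : ℝ :=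
  ∑ S : Finset G, v S * ∑ i : G,
    (∏ k ∈ univ.erase i, mlff x d S u k) * mlee d S i

/-- Second derivative of `mlF`. -/
noncomputable def mlF2 (v : Finset G → ℝ) (x d : G → ℝ) (u : ℝ) : ℝ :=
  ∑ S : Finset G, v S * ∑ i : G,
    (∑ j ∈ univ.erase i,
      (∏ k ∈ (univ.erase i).erase j, mlff x d S u k) * mlee d S j) * mlee d S i

lemma mlF_eq (v : Finset G → ℝ) (x d : G → ℝ) (u : ℝ) :
    multilinear v (fun j => x j + u * d j) = mlF v x d u := by
  simp only [multilinear, mlF]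
  refine Finset.sum_congr rfl fun S _ => ?_
  congr 1
  rw [← Finset.prod_mul_prod_compl S (mlff x d S u)]
  congr 1
  · exact Finset.prod_congr rfl fun k hk => by simp [mlff, hk]
  · exact Finset.prod_congr rfl fun k hk => by
      simp [mlff, (Finset.mem_compl.mp hk)]

lemma hasDerivAt_mlff (x d : G → ℝ) (S : Finset G) (k : G) (u : ℝ) :
    HasDerivAt (fun w => mlff x d S w k) (mlee d S k) u := by
  by_cases h : k ∈ S
  · simp only [mlff, mlee, h, if_true]
    exact (hasDerivAt_mul_const (d k)).const_add (x k)
  · simp only [mlff, mlee, h, if_false]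
    exact ((hasDerivAt_mul_const (d k)).const_add (x k)).const_sub 1

lemma hasDerivAt_mlF (v : Finset G → ℝ) (x d : G → ℝ) (u : ℝ) :
    HasDerivAt (mlF v x d) (mlF1 v x d u) u := by
  refine HasDerivAt.fun_sum fun S _ => ?_
  have h := HasDerivAt.fun_finsetProd (u := (univ : Finset G))
    (f := fun k w => mlff x d S w k) (f' := mlee d S) (x := u)
    (fun k _ => hasDerivAt_mlff x d S k u)
  simp only [smul_eq_mul] at h
  exact h.const_mul (v S)

lemma hasDerivAt_mlF1 (v : Finset G → ℝ) (x d : G → ℝ) (u : ℝ) :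
    HasDerivAt (mlF1 v x d) (mlF2 v x d u) u := by
  refine HasDerivAt.fun_sum fun S _ => ?_
  refine HasDerivAt.const_mul (v S) ?_
  refine HasDerivAt.fun_sum fun i _ => ?_
  have h := HasDerivAt.fun_finsetProd (u := (univ.erase i : Finset G))
    (f := fun k w => mlff x d S w k) (f' := mlee d S) (x := u)
    (fun k _ => hasDerivAt_mlff x d S k u)
  simp only [smul_eq_mul] at h
  exact h.mul_const (mlee d S i)

/-- Splitting a sum over all subsets of a fintype according to membership of two
distinct elements `i ≠ j`. -/
lemma quad_sum (i j : G) (hij : i ≠ j) (g : Finset G → ℝ) :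
    ∑ S : Finset G, g S = ∑ T ∈ ((univ.erase i).erase j).powerset,
      (g T + g (insert j T) + (g (insert i T) + g (insert i (insert j T)))) := by
  have hj' : j ∉ (univ.erase i).erase j := Finset.notMem_erase _ _
  have hi' : i ∉ insert j ((univ.erase i).erase j) := by
    simp [Finset.mem_insert, Finset.mem_erase, hij]
  have huniv : (univ : Finset G) = insert i (insert j ((univ.erase i).erase j)) := by
    rw [Finset.insert_erase (Finset.mem_erase.mpr ⟨Ne.symm hij, Finset.mem_univ j⟩),
      Finset.insert_erase (Finset.mem_univ i)]
  calc ∑ S : Finset G, g S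
      = ∑ S ∈ (univ : Finset G).powerset, g S := by rw [Finset.powerset_univ]
    _ = ∑ S ∈ (insert i (insert j ((univ.erase i).erase j))).powerset, g S := by
        rw [← huniv]
    _ = _ := by
        rw [Finset.sum_powerset_insert hi', Finset.sum_powerset_insert hj',
          Finset.sum_powerset_insert hj', ← Finset.sum_add_distrib,
          ← Finset.sum_add_distrib, ← Finset.sum_add_distrib]

lemma mlF2_nonpos (v : Finset G → ℝ) (hsub : Submodular v) (x d : G → ℝ)
    (hd : ∀ j, 0 ≤ d j) (u : ℝ)
    (hy : ∀ k, 0 ≤ x k + u * d k ∧ x k + u * d k ≤ 1) :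
    mlF2 v x d u ≤ 0 := by
  have hffnn : ∀ (S : Finset G) (k : G), 0 ≤ mlff x d S u k := by
    intro S k
    unfold mlff
    split
    · exact (hy k).1
    · linarith [(hy k).2]
  have step1 : mlF2 v x d u = ∑ i : G, ∑ j ∈ univ.erase i, ∑ S : Finset G,
      v S * ((∏ k ∈ (univ.erase i).erase j, mlff x d S u k)
        * mlee d S j * mlee d S i) := by
    have h1 : mlF2 v x d u = ∑ S : Finset G, ∑ i : G, ∑ j ∈ univ.erase i,
        v S * ((∏ k ∈ (univ.erase i).erase j, mlff x d S u k)
          * mlee d S j * mlee d S i) := by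
      unfold mlF2
      refine Finset.sum_congr rfl fun S _ => ?_
      rw [Finset.mul_sum]
      refine Finset.sum_congr rfl fun i _ => ?_
      rw [Finset.sum_mul, Finset.mul_sum]
    rw [h1, Finset.sum_comm]
    exact Finset.sum_congr rfl fun i _ => Finset.sum_comm
  rw [step1]
  refine Finset.sum_nonpos fun i _ => Finset.sum_nonpos fun j hj => ?_
  have hji : j ≠ i := (Finset.mem_erase.mp hj).1
  have hij : i ≠ j := hji.symm
  rw [quad_sum i j hij]
  refine Finset.sum_nonpos fun T hT => ?_
  have hTsub := Finset.mem_powerset.mp hT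
  have hiT : i ∉ T := fun h =>
    absurd rfl (Finset.mem_erase.mp (Finset.mem_erase.mp (hTsub h)).2).1
  have hjT : j ∉ T := fun h => absurd rfl (Finset.mem_erase.mp (hTsub h)).1
  have hPj : ∏ k ∈ (univ.erase i).erase j, mlff x d (insert j T) u k
      = ∏ k ∈ (univ.erase i).erase j, mlff x d T u k :=
    Finset.prod_congr rfl fun k hk => by
      have hkj : k ≠ j := (Finset.mem_erase.mp hk).1
      simp [mlff, Finset.mem_insert, hkj]
  have hPi : ∏ k ∈ (univ.erase i).erase j, mlff x d (insert i T) u k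
      = ∏ k ∈ (univ.erase i).erase j, mlff x d T u k :=
    Finset.prod_congr rfl fun k hk => by
      have hki : k ≠ i := (Finset.mem_erase.mp (Finset.mem_erase.mp hk).2).1
      simp [mlff, Finset.mem_insert, hki]
  have hPij : ∏ k ∈ (univ.erase i).erase j, mlff x d (insert i (insert j T)) u k
      = ∏ k ∈ (univ.erase i).erase j, mlff x d T u k :=
    Finset.prod_congr rfl fun k hk => by
      have hki : k ≠ i := (Finset.mem_erase.mp (Finset.mem_erase.mp hk).2).1
      have hkj : k ≠ j := (Finset.mem_erase.mp hk).1
      simp [mlff, Finset.mem_insert, hki, hkj]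
  have mTi : mlee d T i = -d i := by simp [mlee, hiT]
  have mTj : mlee d T j = -d j := by simp [mlee, hjT]
  have mjTi : mlee d (insert j T) i = -d i := by
    simp [mlee, Finset.mem_insert, hiT, hij]
  have mjTj : mlee d (insert j T) j = d j := by simp [mlee]
  have miTi : mlee d (insert i T) i = d i := by simp [mlee]
  have miTj : mlee d (insert i T) j = -d j := by
    simp [mlee, Finset.mem_insert, hjT, hji]
  have mijTi : mlee d (insert i (insert j T)) i = d i := by simp [mlee]
  have mijTj : mlee d (insert i (insert j T)) j = d j := by
    simp [mlee, Finset.mem_insert]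
  have hint : insert i T ∩ insert j T = T := by
    ext a
    simp only [Finset.mem_inter, Finset.mem_insert]
    constructor
    · rintro ⟨ha | ha, hb | hb⟩
      · exact absurd (ha.symm.trans hb) hij
      · exact hb
      · exact ha
      · exact ha
    · intro ha
      exact ⟨Or.inr ha, Or.inr ha⟩
  have hunion : insert i T ∪ insert j T = insert i (insert j T) := by
    ext a
    simp only [Finset.mem_union, Finset.mem_insert]
    tauto
  have key : v T + v (insert i (insert j T)) ≤ v (insert i T) + v (insert j T) := by
    have := hsub (insert i T) (insert j T)
    rw [hint, hunion] at this
    linarith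
  have hPnn : 0 ≤ ∏ k ∈ (univ.erase i).erase j, mlff x d T u k :=
    Finset.prod_nonneg fun k _ => hffnn T k
  have h1 : 0 ≤ (∏ k ∈ (univ.erase i).erase j, mlff x d T u k) * d j * d i :=
    mul_nonneg (mul_nonneg hPnn (hd j)) (hd i)
  have h2 : (v T + v (insert i (insert j T)) - v (insert i T) - v (insert j T))
      * ((∏ k ∈ (univ.erase i).erase j, mlff x d T u k) * d j * d i) ≤ 0 :=
    mul_nonpos_of_nonpos_of_nonneg (by linarith) h1
  rw [hPj, hPi, hPij, mTi, mTj, mjTi, mjTj, miTi, miTj, mijTi, mijTj]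
  nlinarith [h2]

end Aux

/-- if `v` is submodular, then its multilinear extension is concave along
any line with nonnegative direction. -/
theorem multilinear_concave_of_submodular {G : Type*} [Fintype G] [DecidableEq G]
    (v : Finset G → ℝ) (hsub : Submodular v)
    (x d : G → ℝ) (hd : ∀ j, 0 ≤ d j)
    (hx : ∀ j, 0 ≤ x j ∧ x j ≤ 1)
    (s t : ℝ) (hs : 0 ≤ s) (ht : 0 ≤ t)
    (hxs : ∀ j, 0 ≤ x j + s * d j ∧ x j + s * d j ≤ 1)
    (hxt : ∀ j, 0 ≤ x j + t * d j ∧ x j + t * d j ≤ 1)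
    (lam : ℝ) (hlam0 : 0 ≤ lam) (hlam1 : lam ≤ 1) :
    lam * multilinear v (fun j => x j + s * d j)
      + (1 - lam) * multilinear v (fun j => x j + t * d j)
    ≤ multilinear v (fun j => x j + (lam * s + (1 - lam) * t) * d j) := by
  set D : Set ℝ := Set.Icc (min s t) (max s t) with hD
  have hDconv : Convex ℝ D := convex_Icc _ _
  have hdF : deriv (mlF v x d) = mlF1 v x d :=
    funext fun w => (hasDerivAt_mlF v x d w).deriv
  have hdF1 : deriv (mlF1 v x d) = mlF2 v x d :=
    funext fun w => (hasDerivAt_mlF1 v x d w).deriv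
  have hcont : ContinuousOn (mlF v x d) D :=
    fun w _ => (hasDerivAt_mlF v x d w).continuousAt.continuousWithinAt
  have hdiff : DifferentiableOn ℝ (mlF v x d) (interior D) :=
    fun w _ => (hasDerivAt_mlF v x d w).differentiableAt.differentiableWithinAt
  have hdiff2 : DifferentiableOn ℝ (deriv (mlF v x d)) (interior D) := by
    rw [hdF]
    exact fun w _ => (hasDerivAt_mlF1 v x d w).differentiableAt.differentiableWithinAt
  have hf'' : ∀ w ∈ interior D, deriv^[2] (mlF v x d) w ≤ 0 := by
    intro w hw
    have hw' : w ∈ D := interior_subset hw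
    rw [hD] at hw'
    have hy : ∀ k, 0 ≤ x k + w * d k ∧ x k + w * d k ≤ 1 := by
      intro k
      have h1 : min s t * d k ≤ w * d k :=
        mul_le_mul_of_nonneg_right hw'.1 (hd k)
      have h2 : w * d k ≤ max s t * d k :=
        mul_le_mul_of_nonneg_right hw'.2 (hd k)
      have h3 : 0 ≤ x k + min s t * d k := by
        rcases min_choice s t with h | h <;> rw [h]
        · exact (hxs k).1
        · exact (hxt k).1
      have h4 : x k + max s t * d k ≤ 1 := by
        rcases max_choice s t with h | h <;> rw [h]
        · exact (hxs k).2
        · exact (hxt k).2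
      constructor <;> linarith
    have : deriv^[2] (mlF v x d) w = mlF2 v x d w := by
      show deriv (deriv (mlF v x d)) w = _
      rw [hdF, hdF1]
    rw [this]
    exact mlF2_nonpos v hsub x d hd w hy
  have hc : ConcaveOn ℝ D (mlF v x d) :=
    concaveOn_of_deriv2_nonpos hDconv hcont hdiff hdiff2 hf''
  have hsD : s ∈ D := ⟨min_le_left s t, le_max_left s t⟩
  have htD : t ∈ D := ⟨min_le_right s t, le_max_right s t⟩
  have := hc.2 hsD htD hlam0 (by linarith : (0:ℝ) ≤ 1 - lam) (by ring)
  rw [mlF_eq v x d s, mlF_eq v x d t, mlF_eq v x d (lam * s + (1 - lam) * t)]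
  simpa [smul_eq_mul] using this
end

section
/- Let v be a monotone submodular set function on a finite ground set G with multilinear extension V. Then for all x, y ∈ [0,1]^G, ∑_{j∈G} y_j · ∂_j V(x) ≥ V(y) − V(x), where ∂_j V(x) denotes V(x with coordinate j set to 1) − V(x with coordinate j set to 0). -/
open Finset

/-- The probability weight of a set `S` under the product distribution given by `x`. -/
noncomputable def mlcoef {G : Type*} [Fintype G] [DecidableEq G]
    (x : G → ℝ) (S : Finset G) : ℝ :=
  (∏ j ∈ S, x j) * ∏ j ∈ Sᶜ, (1 - x j)

/-- Conditional weight avoiding coordinate `j`. -/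
noncomputable def mlq {G : Type*} [Fintype G] [DecidableEq G]
    (x : G → ℝ) (j : G) (R : Finset G) : ℝ :=
  (∏ i ∈ R, x i) * ∏ i ∈ (univ.erase j) \ R, (1 - x i)

lemma ml_eq_sum_coef {G : Type*} [Fintype G] [DecidableEq G]
    (v : Finset G → ℝ) (x : G → ℝ) :
    multilinear v x = ∑ S : Finset G, mlcoef x S * v S := by
  simp [multilinear, mlcoef, mul_comm]

lemma mlcoef_nonneg {G : Type*} [Fintype G] [DecidableEq G]
    (x : G → ℝ) (hx : ∀ j, 0 ≤ x j ∧ x j ≤ 1) (S : Finset G) : 0 ≤ mlcoef x S := by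
  apply mul_nonneg
  · exact Finset.prod_nonneg fun i _ => (hx i).1
  · exact Finset.prod_nonneg fun i _ => by linarith [(hx i).2]

lemma sum_prods_eq_one {G : Type*} [DecidableEq G] (x : G → ℝ) (s : Finset G) :
    ∑ t ∈ s.powerset, (∏ i ∈ t, x i) * ∏ i ∈ s \ t, (1 - x i) = 1 := by
  rw [← Finset.prod_add]
  simp

lemma sum_mlcoef {G : Type*} [Fintype G] [DecidableEq G] (x : G → ℝ) :
    ∑ S : Finset G, mlcoef x S = 1 := by
  have h := sum_prods_eq_one x (univ : Finset G)
  rw [Finset.powerset_univ] at h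
  simp only [mlcoef, Finset.compl_eq_univ_sdiff]
  exact h

lemma sum_mlq {G : Type*} [Fintype G] [DecidableEq G] (x : G → ℝ) (j : G) :
    ∑ R ∈ (univ.erase j).powerset, mlq x j R = 1 :=
  sum_prods_eq_one x (univ.erase j)

/-- The key decomposition of a weighted sum by conditioning on coordinate `j`. -/
lemma ml_core {G : Type*} [Fintype G] [DecidableEq G]
    (x : G → ℝ) (j : G) (g : Finset G → ℝ) :
    ∑ S : Finset G, mlcoef x S * g S
      = (1 - x j) * ∑ R ∈ (univ.erase j).powerset, mlq x j R * g R
        + x j * ∑ R ∈ (univ.erase j).powerset, mlq x j R * g (insert j R) := by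
  have hj : j ∉ univ.erase j := notMem_erase j univ
  have huniv : (univ : Finset G) = insert j (univ.erase j) := (insert_erase (mem_univ j)).symm
  rw [show (∑ S : Finset G, mlcoef x S * g S)
      = ∑ S ∈ (univ : Finset G).powerset, mlcoef x S * g S by rw [Finset.powerset_univ]]
  conv_lhs => rw [huniv]
  rw [Finset.sum_powerset_insert hj, Finset.mul_sum, Finset.mul_sum]
  congr 1
  · apply Finset.sum_congr rfl
    intro R hR
    have hjR : j ∉ R := fun h => hj (Finset.mem_powerset.mp hR h)
    have hcompl : Rᶜ = insert j ((univ.erase j) \ R) := by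
      rw [Finset.compl_eq_univ_sdiff]
      conv_lhs => rw [huniv]
      exact Finset.insert_sdiff_of_notMem _ hjR
    have hjnd : j ∉ (univ.erase j) \ R := fun h => hj (Finset.mem_sdiff.mp h).1
    simp only [mlcoef, mlq, hcompl, Finset.prod_insert hjnd]
    ring
  · apply Finset.sum_congr rfl
    intro R hR
    have hjR : j ∉ R := fun h => hj (Finset.mem_powerset.mp hR h)
    have hcompl : Rᶜ = insert j ((univ.erase j) \ R) := by
      rw [Finset.compl_eq_univ_sdiff]
      conv_lhs => rw [huniv]
      exact Finset.insert_sdiff_of_notMem _ hjR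
    have hjnd : j ∉ (univ.erase j) \ R := fun h => hj (Finset.mem_sdiff.mp h).1
    have hcompl2 : (insert j R)ᶜ = (univ.erase j) \ R := by
      rw [Finset.compl_insert, hcompl, Finset.erase_insert hjnd]
    simp only [mlcoef, mlq, hcompl2, Finset.prod_insert hjR]
    ring

lemma mlq_update {G : Type*} [Fintype G] [DecidableEq G]
    (x : G → ℝ) (j : G) (c : ℝ) (R : Finset G) (hR : R ⊆ univ.erase j) :
    mlq (Function.update x j c) j R = mlq x j R := by
  unfold mlq
  congr 1
  · exact Finset.prod_congr rfl fun i hi =>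
      Function.update_of_ne (Finset.ne_of_mem_erase (hR hi)) _ _
  · exact Finset.prod_congr rfl fun i hi => by
      have : i ≠ j := Finset.ne_of_mem_erase (Finset.mem_sdiff.mp hi).1
      simp [Function.update_of_ne this]

lemma ml_marginal {G : Type*} [Fintype G] [DecidableEq G] (y : G → ℝ) (j : G) :
    ∑ T : Finset G, mlcoef y T * (if j ∈ T then (1:ℝ) else 0) = y j := by
  rw [ml_core y j (fun T => if j ∈ T then (1:ℝ) else 0)]
  have hj : j ∉ univ.erase j := notMem_erase j univ
  have h1 : ∑ R ∈ (univ.erase j).powerset, mlq y j R * (if j ∈ R then (1:ℝ) else 0) = 0 := by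
    apply Finset.sum_eq_zero
    intro R hR
    have : j ∉ R := fun h => hj (Finset.mem_powerset.mp hR h)
    simp [this]
  have h2 : ∑ R ∈ (univ.erase j).powerset,
      mlq y j R * (if j ∈ insert j R then (1:ℝ) else 0) = 1 := by
    simp only [Finset.mem_insert_self, if_pos, mul_one]
    exact sum_mlq y j
  rw [h1, h2]
  ring

lemma ml_grad {G : Type*} [Fintype G] [DecidableEq G]
    (v : Finset G → ℝ) (x : G → ℝ) (j : G) :
    multilinear v (Function.update x j 1) - multilinear v (Function.update x j 0)
      = ∑ S : Finset G, mlcoef x S * (v (insert j S) - v (S.erase j)) := by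
  have hj : j ∉ univ.erase j := notMem_erase j univ
  have e1 : multilinear v (Function.update x j 1)
      = ∑ R ∈ (univ.erase j).powerset, mlq x j R * v (insert j R) := by
    rw [ml_eq_sum_coef, ml_core (Function.update x j 1) j v]
    simp only [Function.update_self, sub_self, zero_mul, one_mul, zero_add]
    exact Finset.sum_congr rfl fun R hR => by
      rw [mlq_update x j 1 R (Finset.mem_powerset.mp hR)]
  have e0 : multilinear v (Function.update x j 0)
      = ∑ R ∈ (univ.erase j).powerset, mlq x j R * v R := by
    rw [ml_eq_sum_coef, ml_core (Function.update x j 0) j v]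
    simp only [Function.update_self, sub_zero, one_mul, zero_mul, add_zero]
    exact Finset.sum_congr rfl fun R hR => by
      rw [mlq_update x j 0 R (Finset.mem_powerset.mp hR)]
  have e2 : ∑ S : Finset G, mlcoef x S * (v (insert j S) - v (S.erase j))
      = ∑ R ∈ (univ.erase j).powerset, mlq x j R * (v (insert j R) - v R) := by
    rw [ml_core x j (fun S => v (insert j S) - v (S.erase j))]
    have hA : ∑ R ∈ (univ.erase j).powerset,
        mlq x j R * (v (insert j R) - v (R.erase j))
        = ∑ R ∈ (univ.erase j).powerset, mlq x j R * (v (insert j R) - v R) := by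
      apply Finset.sum_congr rfl
      intro R hR
      have hjR : j ∉ R := fun h => hj (Finset.mem_powerset.mp hR h)
      rw [Finset.erase_eq_of_notMem hjR]
    have hB : ∑ R ∈ (univ.erase j).powerset,
        mlq x j R * (v (insert j (insert j R)) - v ((insert j R).erase j))
        = ∑ R ∈ (univ.erase j).powerset, mlq x j R * (v (insert j R) - v R) := by
      apply Finset.sum_congr rfl
      intro R hR
      have hjR : j ∉ R := fun h => hj (Finset.mem_powerset.mp hR h)
      rw [Finset.insert_idem, Finset.erase_insert hjR]
    rw [hA, hB]
    ring
  rw [e1, e0, e2, ← Finset.sum_sub_distrib]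
  exact Finset.sum_congr rfl fun R _ => (mul_sub _ _ _).symm

lemma pointwise_submodular {G : Type*} [Fintype G] [DecidableEq G]
    (v : Finset G → ℝ) (hmono : Monotone v) (hsub : Submodular v) (S T : Finset G) :
    v T - v S ≤ ∑ j ∈ T, (v (insert j S) - v (S.erase j)) := by
  have tel : ∀ U : Finset G, v (S ∪ U) ≤ v S + ∑ j ∈ U, (v (insert j S) - v S) := by
    intro U
    induction U using Finset.induction_on with
    | empty => simp
    | @insert a U ha ih =>
      have hcap : insert a S ∩ (S ∪ U) = S := by
        ext i
        simp only [Finset.mem_inter, Finset.mem_insert, Finset.mem_union]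
        constructor
        · rintro ⟨(rfl | h1), h2⟩
          · rcases h2 with h | h
            · exact h
            · exact absurd h ha
          · exact h1
        · intro h
          exact ⟨Or.inr h, Or.inl h⟩
      have hun : insert a S ∪ (S ∪ U) = S ∪ insert a U := by
        ext i
        simp only [Finset.mem_union, Finset.mem_insert]
        tauto
      have hs := hsub (insert a S) (S ∪ U)
      rw [hcap, hun] at hs
      rw [Finset.sum_insert ha]
      linarith
  have h1 : v T ≤ v (S ∪ T) := hmono Finset.subset_union_right
  have h2 : v (S ∪ T) ≤ v S + ∑ j ∈ T, (v (insert j S) - v S) := tel T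
  have h3 : ∑ j ∈ T, (v (insert j S) - v S) ≤ ∑ j ∈ T, (v (insert j S) - v (S.erase j)) := by
    apply Finset.sum_le_sum
    intro j _
    have : v (S.erase j) ≤ v S := hmono (Finset.erase_subset j S)
    linarith
  linarith

/-- for a monotone submodular `v` with multilinear extension `V`,
`∑_j y_j ∂_j V(x) ≥ V(y) − V(x)`, where
`∂_j V(x) = V(x with coordinate j set to 1) − V(x with coordinate j set to 0)`. -/
theorem gradient_inner_ge_diff {G : Type*} [Fintype G] [DecidableEq G]
    (v : Finset G → ℝ) (hmono : Monotone v) (hsub : Submodular v)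
    (x y : G → ℝ) (hx : ∀ j, 0 ≤ x j ∧ x j ≤ 1) (hy : ∀ j, 0 ≤ y j ∧ y j ≤ 1) :
    multilinear v y - multilinear v x ≤
      ∑ j : G, y j * (multilinear v (Function.update x j 1)
        - multilinear v (Function.update x j 0)) := by
  have lhs_eq : multilinear v y - multilinear v x
      = ∑ S : Finset G, ∑ T : Finset G, mlcoef x S * mlcoef y T * (v T - v S) := by
    have h1 : ∑ S : Finset G, ∑ T : Finset G, mlcoef x S * (mlcoef y T * v T)
        = multilinear v y := by
      rw [← Finset.sum_mul_sum, sum_mlcoef, one_mul, ml_eq_sum_coef]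
    have h2 : ∑ S : Finset G, ∑ T : Finset G, mlcoef x S * mlcoef y T * v S
        = multilinear v x := by
      have : ∀ S : Finset G, ∑ T : Finset G, mlcoef x S * mlcoef y T * v S
          = (mlcoef x S * v S) * ∑ T : Finset G, mlcoef y T := by
        intro S
        rw [Finset.mul_sum]
        exact Finset.sum_congr rfl fun T _ => by ring
      rw [Finset.sum_congr rfl fun S _ => this S]
      simp only [sum_mlcoef, mul_one]
      rw [ml_eq_sum_coef]
    rw [← h1, ← h2, ← Finset.sum_sub_distrib]
    apply Finset.sum_congr rfl
    intro S _
    rw [← Finset.sum_sub_distrib]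
    exact Finset.sum_congr rfl fun T _ => by ring
  have rhs_eq : ∑ j : G, y j * (multilinear v (Function.update x j 1)
        - multilinear v (Function.update x j 0))
      = ∑ S : Finset G, ∑ T : Finset G, mlcoef x S * mlcoef y T
          * ∑ j ∈ T, (v (insert j S) - v (S.erase j)) := by
    have step : ∀ j : G, y j * (multilinear v (Function.update x j 1)
        - multilinear v (Function.update x j 0))
        = ∑ T : Finset G, ∑ S : Finset G,
            (mlcoef y T * (if j ∈ T then (1:ℝ) else 0))
            * (mlcoef x S * (v (insert j S) - v (S.erase j))) := by
      intro j
      rw [← Finset.sum_mul_sum, ml_marginal, ml_grad]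
    rw [Finset.sum_congr rfl fun j _ => step j]
    rw [Finset.sum_comm]
    have swap : ∀ T : Finset G, ∑ j : G, ∑ S : Finset G,
        (mlcoef y T * (if j ∈ T then (1:ℝ) else 0))
        * (mlcoef x S * (v (insert j S) - v (S.erase j)))
        = ∑ S : Finset G, ∑ j : G,
        (mlcoef y T * (if j ∈ T then (1:ℝ) else 0))
        * (mlcoef x S * (v (insert j S) - v (S.erase j))) := fun T => Finset.sum_comm
    rw [Finset.sum_congr rfl fun T _ => swap T]
    rw [Finset.sum_comm]
    apply Finset.sum_congr rfl
    intro S _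
    apply Finset.sum_congr rfl
    intro T _
    have hzero : ∀ j ∈ (univ : Finset G), j ∉ T →
        (mlcoef y T * (if j ∈ T then (1:ℝ) else 0))
        * (mlcoef x S * (v (insert j S) - v (S.erase j))) = 0 := by
      intro j _ hj
      simp [hj]
    rw [← Finset.sum_subset (Finset.subset_univ T) hzero, Finset.mul_sum]
    exact Finset.sum_congr rfl fun j hj => by simp only [if_pos hj]; ring
  rw [lhs_eq, rhs_eq]
  apply Finset.sum_le_sum
  intro S _
  apply Finset.sum_le_sum
  intro T _
  exact mul_le_mul_of_nonneg_left (pointwise_submodular v hmono hsub S T)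
    (mul_nonneg (mlcoef_nonneg x hx S) (mlcoef_nonneg y hy T))
end

section
/- Let v be a submodular set function on a finite ground set G. Then for every S ⊆ G, ∑_{j∈S} (v(S) − v(S∖{j})) ≤ v(S) − v(∅). -/
open Finset

/-- for a submodular `v` and every `S ⊆ G`,
`∑_{j∈S} (v(S) − v(S∖{j})) ≤ v(S) − v(∅)`. -/
theorem sum_marginals_le_of_submodular {G : Type*} [Fintype G] [DecidableEq G]
    (v : Finset G → ℝ) (hsub : Submodular v) (S : Finset G) :
    ∑ j ∈ S, (v S - v (S.erase j)) ≤ v S - v ∅ := by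
  induction S using Finset.induction_on with
  | empty => simp
  | @insert a S ha ih =>
    have herase : (insert a S).erase a = S := Finset.erase_insert ha
    rw [Finset.sum_insert ha, herase]
    have key : ∀ j ∈ S, v (insert a S) - v ((insert a S).erase j)
        ≤ v S - v (S.erase j) := by
      intro j hj
      have hne : j ≠ a := fun h => ha (h ▸ hj)
      have h1 : (insert a S).erase j = insert a (S.erase j) :=
        Finset.erase_insert_of_ne hne.symm
      have h2 : S ∩ insert a (S.erase j) = S.erase j := by
        rw [Finset.inter_insert_of_notMem ha]
        exact Finset.inter_eq_right.mpr (Finset.erase_subset _ _)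
      have h3 : S ∪ insert a (S.erase j) = insert a S := by
        rw [Finset.union_insert]
        congr 1
        exact Finset.union_eq_left.mpr (Finset.erase_subset _ _)
      have := hsub S (insert a (S.erase j))
      rw [h1]; rw [h2, h3] at this
      linarith
    have hsum : ∑ j ∈ S, (v (insert a S) - v ((insert a S).erase j))
        ≤ ∑ j ∈ S, (v S - v (S.erase j)) := Finset.sum_le_sum key
    linarith
end

section
/- Let v be a nonnegative monotone submodular set function on a finite ground set G with multilinear extension V. Then for all x, y ∈ [0,1]^G with x + y ∈ [0,1]^G componentwise, V(x + y) ≤ V(x) + ∑_{j∈G} y_j · v({j}). -/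
open Finset

lemma compl_sdiff_eq {G : Type*} [Fintype G] [DecidableEq G] (j : G) (S : Finset G)
    (hjS : j ∉ S) : Sᶜ.erase j = (Finset.univ.erase j) \ S := by
  ext i
  simp only [mem_erase, mem_compl, mem_sdiff, mem_univ, and_true, true_and]

lemma multilinear_update {G : Type*} [Fintype G] [DecidableEq G]
    (v : Finset G → ℝ) (z : G → ℝ) (j : G) (c : ℝ) :
    multilinear v (Function.update z j c) =
      ∑ S ∈ ((Finset.univ : Finset G).erase j).powerset,
        ((1 - c) * v S + c * v (insert j S)) *
          ((∏ i ∈ S, z i) * ∏ i ∈ (Finset.univ.erase j) \ S, (1 - z i)) := by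
  have hpow : (Finset.univ : Finset (Finset G)) = (insert j (Finset.univ.erase j)).powerset := by
    rw [Finset.insert_erase (mem_univ j), Finset.powerset_univ]
  rw [multilinear, hpow, Finset.sum_powerset_insert (notMem_erase j Finset.univ), ← Finset.sum_add_distrib]
  apply Finset.sum_congr rfl
  intro S hS
  have hjS : j ∉ S := fun h => (notMem_erase j Finset.univ) (Finset.mem_powerset.mp hS h)
  have hjSc : j ∈ Sᶜ := Finset.mem_compl.mpr hjS
  have h1 : ∏ i ∈ S, Function.update z j c i = ∏ i ∈ S, z i :=
    Finset.prod_congr rfl fun i hi => Function.update_of_ne (by rintro rfl; exact hjS hi) _ _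
  have h2 : ∏ i ∈ Sᶜ, (1 - Function.update z j c i) =
      (1 - c) * ∏ i ∈ Sᶜ.erase j, (1 - z i) := by
    rw [← Finset.mul_prod_erase _ _ hjSc, Function.update_self]
    congr 1
    exact Finset.prod_congr rfl fun i hi =>
      by rw [Function.update_of_ne (Finset.mem_erase.mp hi).1]
  have h3 : ∏ i ∈ insert j S, Function.update z j c i = c * ∏ i ∈ S, z i := by
    rw [Finset.prod_insert hjS, Function.update_self, h1]
  have h4 : ∏ i ∈ (insert j S)ᶜ, (1 - Function.update z j c i) =
      ∏ i ∈ Sᶜ.erase j, (1 - z i) := by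
    rw [Finset.compl_insert]
    exact Finset.prod_congr rfl fun i hi =>
      by rw [Function.update_of_ne (Finset.mem_erase.mp hi).1]
  rw [h1, h2, h3, h4, compl_sdiff_eq j S hjS]
  ring

lemma multilinear_update_le {G : Type*} [Fintype G] [DecidableEq G]
    (v : Finset G → ℝ) (hnn : ∀ S, 0 ≤ v S) (hsub : Submodular v)
    (z : G → ℝ) (hz : ∀ i, 0 ≤ z i ∧ z i ≤ 1) (j : G) (a b : ℝ) (hba : b ≤ a) :
    multilinear v (Function.update z j a) ≤
      multilinear v (Function.update z j b) + (a - b) * v {j} := by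
  rw [multilinear_update, multilinear_update]
  have hP : ∀ S ∈ ((Finset.univ : Finset G).erase j).powerset,
      0 ≤ (∏ i ∈ S, z i) * ∏ i ∈ (Finset.univ.erase j) \ S, (1 - z i) := by
    intro S _
    apply mul_nonneg
    · exact Finset.prod_nonneg fun i _ => (hz i).1
    · exact Finset.prod_nonneg fun i _ => by linarith [(hz i).2]
  have hsum1 : ∑ S ∈ ((Finset.univ : Finset G).erase j).powerset,
      (∏ i ∈ S, z i) * ∏ i ∈ (Finset.univ.erase j) \ S, (1 - z i) = 1 := by
    have := Finset.prod_add z (fun i => 1 - z i) ((Finset.univ : Finset G).erase j)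
    simp only [add_sub_cancel, Finset.prod_const_one] at this
    exact this.symm
  have hmarg : ∀ S ∈ ((Finset.univ : Finset G).erase j).powerset,
      v (insert j S) - v S ≤ v {j} := by
    intro S hS
    have hjS : j ∉ S := fun h => (notMem_erase j Finset.univ) (Finset.mem_powerset.mp hS h)
    have := hsub S {j}
    rw [Finset.inter_singleton_of_notMem hjS, Finset.union_comm, ← Finset.insert_eq] at this
    have h0 := hnn (∅ : Finset G)
    linarith
  calc ∑ S ∈ ((Finset.univ : Finset G).erase j).powerset,
        ((1 - a) * v S + a * v (insert j S)) *
          ((∏ i ∈ S, z i) * ∏ i ∈ (Finset.univ.erase j) \ S, (1 - z i))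
      ≤ ∑ S ∈ ((Finset.univ : Finset G).erase j).powerset,
        (((1 - b) * v S + b * v (insert j S)) *
          ((∏ i ∈ S, z i) * ∏ i ∈ (Finset.univ.erase j) \ S, (1 - z i)) +
          (a - b) * v {j} * ((∏ i ∈ S, z i) * ∏ i ∈ (Finset.univ.erase j) \ S, (1 - z i))) := by
        apply Finset.sum_le_sum
        intro S hS
        have h1 := hmarg S hS
        have h2 := hP S hS
        nlinarith [mul_le_mul_of_nonneg_right h1 h2]
    _ = (∑ S ∈ ((Finset.univ : Finset G).erase j).powerset,
        ((1 - b) * v S + b * v (insert j S)) *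
          ((∏ i ∈ S, z i) * ∏ i ∈ (Finset.univ.erase j) \ S, (1 - z i))) +
        (a - b) * v {j} * ∑ S ∈ ((Finset.univ : Finset G).erase j).powerset,
          ((∏ i ∈ S, z i) * ∏ i ∈ (Finset.univ.erase j) \ S, (1 - z i)) := by
        rw [Finset.sum_add_distrib, Finset.mul_sum]
    _ = _ := by rw [hsum1]; ring

/-- for a nonnegative monotone submodular `v` with multilinear extension `V`,
`V(x + y) ≤ V(x) + ∑_j y_j · v({j})`. -/
theorem multilinear_add_le {G : Type*} [Fintype G] [DecidableEq G]
    (v : Finset G → ℝ) (hnn : ∀ S, 0 ≤ v S) (hmono : Monotone v) (hsub : Submodular v)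
    (x y : G → ℝ) (hx : ∀ j, 0 ≤ x j ∧ x j ≤ 1) (hy : ∀ j, 0 ≤ y j ∧ y j ≤ 1)
    (hxy : ∀ j, 0 ≤ x j + y j ∧ x j + y j ≤ 1) :
    multilinear v (x + y) ≤ multilinear v x + ∑ j : G, y j * v {j} := by
  set z : Finset G → (G → ℝ) := fun A i => if i ∈ A then x i + y i else x i with hz
  have hzbd : ∀ A i, 0 ≤ z A i ∧ z A i ≤ 1 := by
    intro A i
    simp only [hz]
    split_ifs
    · exact hxy i
    · exact hx i
  have key : ∀ A : Finset G,
      multilinear v (z A) ≤ multilinear v x + ∑ j ∈ A, y j * v {j} := by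
    intro A
    induction A using Finset.induction_on with
    | empty => simp [hz]
    | @insert j A hjA ih =>
      have heq : z (insert j A) = Function.update (z A) j (x j + y j) := by
        funext i
        by_cases hij : i = j
        · subst hij; simp [hz, Function.update_self]
        · simp [hz, Function.update_of_ne hij, Finset.mem_insert, hij]
      have heq2 : z A = Function.update (z A) j (x j) := by
        funext i
        by_cases hij : i = j
        · subst hij; simp [hz, hjA]
        · simp [Function.update_of_ne hij]
      have hstep := multilinear_update_le v hnn hsub (z A) (hzbd A) j
        (x j + y j) (x j) (by linarith [(hy j).1])
      rw [heq, Finset.sum_insert hjA]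
      calc multilinear v (Function.update (z A) j (x j + y j))
          ≤ multilinear v (Function.update (z A) j (x j)) + (x j + y j - x j) * v {j} := hstep
        _ = multilinear v (z A) + y j * v {j} := by rw [← heq2]; ring_nf
        _ ≤ multilinear v x + ∑ i ∈ A, y i * v {i} + y j * v {j} := by linarith
        _ = multilinear v x + (y j * v {j} + ∑ i ∈ A, y i * v {i}) := by ring
  have hzu : z Finset.univ = x + y := by
    funext i; simp [hz]
  calc multilinear v (x + y) = multilinear v (z Finset.univ) := by rw [hzu]
    _ ≤ multilinear v x + ∑ j : G, y j * v {j} := key Finset.univ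
end

section
/- Let A be a set of n agents, each with a nonnegative monotone submodular valuation v_i on a finite ground set G, and let V_i be the multilinear extension of v_i. Let H ⊆ G with |H| = n, let (H_i)_{i∈A} be a partition of H, and let y ∈ [0,1]^{A×G} satisfy y_{ij} = 0 for all j ∈ H and ∑_{i∈A} y_{ij} ≤ 1 for every j ∈ G∖H. Then there exists an injection σ : A → H such that (∏_{i∈A} V_i(y_i + 1_{σ(i)}))^{1/n} ≥ 3^{−1/3} · (∏_{i∈A} V_i(y_i + 1_{H_i}))^{1/n}. -/
open Finset

/-- The indicator vector of a finite set `S`. -/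
def indVec {G : Type*} [DecidableEq G] (S : Finset G) : G → ℝ :=
  fun j => if j ∈ S then 1 else 0

/- ======================= auxiliary lemmas ======================= -/

lemma multilinear_pin {G : Type*} [Fintype G] [DecidableEq G] (v : Finset G → ℝ)
    (z : G → ℝ) (D Q : Finset G) (hQ : Q ⊆ D) (hz : ∀ k ∈ D, z k = 0) :
    multilinear v (z + indVec Q)
      = ∑ T ∈ Dᶜ.powerset,
          ((∏ k ∈ T, z k) * ∏ k ∈ Dᶜ \ T, (1 - z k)) * v (T ∪ Q) := by
  classical
  set x : G → ℝ := z + indVec Q with hx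
  have hxD : ∀ k ∈ D, x k = if k ∈ Q then 1 else 0 := by
    intro k hk
    simp [hx, indVec, hz k hk]
  have hxD' : ∀ k, k ∉ D → x k = z k := by
    intro k hk
    have : k ∉ Q := fun h => hk (hQ h)
    simp [hx, indVec, this]
  rw [multilinear]
  rw [← Finset.sum_filter_add_sum_filter_not Finset.univ (fun S => S ∩ D = Q)]
  have hzero : ∑ S ∈ Finset.univ.filter (fun S => ¬ S ∩ D = Q),
      v S * ((∏ j ∈ S, x j) * ∏ j ∈ Sᶜ, (1 - x j)) = 0 := by
    apply Finset.sum_eq_zero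
    intro S hS
    simp only [Finset.mem_filter] at hS
    have h := hS.2
    by_cases hQS : Q ⊆ S
    · have hQSD : Q ⊆ S ∩ D := Finset.subset_inter hQS hQ
      obtain ⟨j, hj1, hj2⟩ := Finset.exists_of_ssubset (hQSD.ssubset_of_ne (Ne.symm h))
      have : x j = 0 := by rw [hxD j (Finset.mem_of_mem_inter_right hj1)]; simp [hj2]
      rw [Finset.prod_eq_zero (Finset.mem_of_mem_inter_left hj1) this]
      ring
    · obtain ⟨j, hjQ, hjS⟩ := Finset.not_subset.mp hQS
      have : 1 - x j = 0 := by rw [hxD j (hQ hjQ)]; simp [hjQ]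
      rw [Finset.prod_eq_zero (by simpa using hjS : j ∈ Sᶜ) this]
      ring
  rw [hzero, add_zero]
  apply Finset.sum_nbij' (fun S => S \ D) (fun T => T ∪ Q)
  · intro S hS
    simp only [Finset.mem_filter] at hS
    simp only [Finset.mem_powerset]
    intro k hk
    simp only [Finset.mem_sdiff] at hk
    simpa using hk.2
  · intro T hT
    simp only [Finset.mem_powerset] at hT
    simp only [Finset.mem_filter, Finset.mem_univ, true_and]
    ext k
    have hTk := @hT k
    simp only [Finset.mem_compl] at hTk
    simp only [Finset.mem_inter, Finset.mem_union]
    constructor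
    · rintro ⟨hk1 | hk1, hk2⟩
      · exact absurd hk2 (hTk hk1)
      · exact hk1
    · intro hk; exact ⟨Or.inr hk, hQ hk⟩
  · intro S hS
    simp only [Finset.mem_filter, Finset.mem_univ, true_and] at hS
    rw [Finset.ext_iff] at hS
    ext k
    have hSk := hS k
    have hQk := @hQ k
    simp only [Finset.mem_inter] at hSk
    simp only [Finset.mem_union, Finset.mem_sdiff]
    by_cases hkD : k ∈ D <;> tauto
  · intro T hT
    simp only [Finset.mem_powerset] at hT
    have hTk' := @hT
    ext k
    have hTk := fun h => by simpa using hTk' (x := k) h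
    have hQk := @hQ k
    simp only [Finset.mem_sdiff, Finset.mem_union]
    tauto
  · intro S hS
    simp only [Finset.mem_filter, Finset.mem_univ, true_and] at hS
    have hSD : S ∩ D = Q := hS
    have hunion : S \ D ∪ Q = S := by
      rw [Finset.ext_iff] at hSD
      ext k
      have hSk := hSD k
      have hQk := @hQ k
      simp only [Finset.mem_inter] at hSk
      simp only [Finset.mem_union, Finset.mem_sdiff]
      by_cases hkD : k ∈ D <;> tauto
    rw [hunion]
    have h1 : ∏ j ∈ S, x j = ∏ k ∈ S \ D, z k := by
      rw [← Finset.prod_sdiff (Finset.inter_subset_left (s₂ := D))]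
      rw [show S \ (S ∩ D) = S \ D by
        ext k; simp only [Finset.mem_sdiff, Finset.mem_inter]; tauto]
      rw [hSD]
      have hone : ∏ j ∈ Q, x j = 1 := Finset.prod_eq_one (fun j hj => by
        rw [hxD j (hQ hj)]; simp [hj])
      rw [Finset.prod_congr rfl (fun k hk => hxD' k (Finset.mem_sdiff.mp hk).2), hone, mul_one]
    have h2 : ∏ j ∈ Sᶜ, (1 - x j) = ∏ k ∈ Dᶜ \ (S \ D), (1 - z k) := by
      have hset : Dᶜ \ (S \ D) = Sᶜ \ D := by
        ext k; simp only [Finset.mem_sdiff, Finset.mem_compl]; tauto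
      rw [hset]
      rw [← Finset.prod_sdiff (Finset.inter_subset_left (s₂ := D) (s₁ := Sᶜ))]
      rw [show Sᶜ \ (Sᶜ ∩ D) = Sᶜ \ D by
        ext k; simp only [Finset.mem_sdiff, Finset.mem_inter]; tauto]
      have hQc : Sᶜ ∩ D = D \ Q := by
        rw [Finset.ext_iff] at hSD
        ext k
        have hSk := hSD k
        simp only [Finset.mem_inter] at hSk
        simp only [Finset.mem_inter, Finset.mem_compl, Finset.mem_sdiff]
        tauto
      rw [hQc]
      have hone : ∏ j ∈ D \ Q, (1 - x j) = 1 := Finset.prod_eq_one (fun j hj => by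
        have hj' := Finset.mem_sdiff.mp hj
        rw [hxD j hj'.1]; simp [hj'.2])
      rw [hone, mul_one]
      exact Finset.prod_congr rfl (fun k hk => by rw [hxD' k (Finset.mem_sdiff.mp hk).2])
    rw [h1, h2]
    ring

lemma weight_nonneg {G : Type*} (z : G → ℝ) (h01 : ∀ j, 0 ≤ z j ∧ z j ≤ 1)
    (T U : Finset G) :
    0 ≤ (∏ k ∈ T, z k) * ∏ k ∈ U, (1 - z k) :=
  mul_nonneg (Finset.prod_nonneg fun k _ => (h01 k).1)
    (Finset.prod_nonneg fun k _ => by linarith [(h01 k).2])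

lemma multilinear_nonneg {G : Type*} [Fintype G] [DecidableEq G] (v : Finset G → ℝ)
    (hnn : ∀ S, 0 ≤ v S) (z : G → ℝ)
    (h01 : ∀ j, 0 ≤ z j ∧ z j ≤ 1) : 0 ≤ multilinear v z := by
  apply Finset.sum_nonneg
  intro S _
  exact mul_nonneg (hnn S) (weight_nonneg z h01 S Sᶜ)

lemma indVec_empty {G : Type*} [DecidableEq G] : (indVec (∅ : Finset G)) = 0 := by
  funext j; simp [indVec]

lemma multilinear_mono_single {G : Type*} [Fintype G] [DecidableEq G] (v : Finset G → ℝ)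
    (hmono : Monotone v) (z : G → ℝ)
    (h01 : ∀ j, 0 ≤ z j ∧ z j ≤ 1) (a : G) (ha : z a = 0) :
    multilinear v z ≤ multilinear v (z + indVec {a}) := by
  have h0 := multilinear_pin v z {a} ∅ (Finset.empty_subset _) (by simpa using ha)
  have h1 := multilinear_pin v z {a} {a} (subset_refl _) (by simpa using ha)
  rw [indVec_empty, add_zero] at h0
  rw [h0, h1]
  apply Finset.sum_le_sum
  intro T _
  have hw := weight_nonneg z h01 T ({a}ᶜ \ T)
  nlinarith [hmono (Finset.subset_union_left (s₁ := T) (s₂ := ({a} : Finset G))),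
    hmono (Finset.union_subset_union_right (Finset.empty_subset ({a} : Finset G)) (s := T))]

lemma multilinear_pair {G : Type*} [Fintype G] [DecidableEq G] (v : Finset G → ℝ)
    (hsub : ∀ S T : Finset G, v (S ∩ T) + v (S ∪ T) ≤ v S + v T)
    (z : G → ℝ) (h01 : ∀ j, 0 ≤ z j ∧ z j ≤ 1) (a b : G) (hab : a ≠ b)
    (haz : z a = 0) (hbz : z b = 0) :
    multilinear v (z + indVec {a, b}) + multilinear v z
      ≤ multilinear v (z + indVec {a}) + multilinear v (z + indVec {b}) := by
  have hzD : ∀ k ∈ ({a, b} : Finset G), z k = 0 := by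
    intro k hk; rcases Finset.mem_insert.mp hk with h | h
    · exact h ▸ haz
    · exact (Finset.mem_singleton.mp h) ▸ hbz
  have h0 := multilinear_pin v z {a, b} ∅ (Finset.empty_subset _) hzD
  have ha := multilinear_pin v z {a, b} {a} (by simp) hzD
  have hb := multilinear_pin v z {a, b} {b} (by simp) hzD
  have hab2 := multilinear_pin v z {a, b} {a, b} (subset_refl _) hzD
  rw [indVec_empty, add_zero] at h0
  rw [h0, ha, hb, hab2, ← Finset.sum_add_distrib, ← Finset.sum_add_distrib]
  apply Finset.sum_le_sum
  intro T hT
  simp only [Finset.mem_powerset] at hT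
  have haT : a ∉ T := by
    intro h; have := hT h; simp at this
  have hbT : b ∉ T := by
    intro h; have := hT h; simp at this
  have hI : (T ∪ {a}) ∩ (T ∪ {b}) = T := by
    ext k
    simp only [Finset.mem_inter, Finset.mem_union, Finset.mem_singleton]
    constructor
    · rintro ⟨h1 | h1, h2 | h2⟩ <;>
        first
          | assumption
          | (exfalso; exact hab (h1 ▸ h2 ▸ rfl))
    · tauto
  have hU : (T ∪ {a}) ∪ (T ∪ {b}) = T ∪ {a, b} := by
    ext k
    simp only [Finset.mem_union, Finset.mem_insert, Finset.mem_singleton]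
    tauto
  have hs := hsub (T ∪ {a}) (T ∪ {b})
  rw [hI, hU] at hs
  have hw := weight_nonneg z h01 T (({a, b} : Finset G)ᶜ \ T)
  have hTe : T ∪ ∅ = T := Finset.union_empty T
  rw [hTe]
  nlinarith

lemma indVec_union {G : Type*} [DecidableEq G] (S T : Finset G) (h : Disjoint S T) :
    indVec (S ∪ T) = indVec S + indVec T := by
  funext j
  simp only [indVec, Pi.add_apply, Finset.mem_union]
  by_cases hS : j ∈ S
  · have hT : j ∉ T := fun hT => (Finset.disjoint_left.mp h hS) hT
    simp [hS, hT]
  · by_cases hT : j ∈ T <;> simp [hS, hT]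

lemma multilinear_marginal {G : Type*} [Fintype G] [DecidableEq G] (v : Finset G → ℝ)
    (hsub : ∀ S T : Finset G, v (S ∩ T) + v (S ∪ T) ≤ v S + v T)
    (z : G → ℝ) (h01 : ∀ j, 0 ≤ z j ∧ z j ≤ 1) (a : G) (S : Finset G) (haS : a ∉ S)
    (hz : ∀ k ∈ insert a S, z k = 0) :
    multilinear v (z + indVec (insert a S)) - multilinear v (z + indVec S)
      ≤ multilinear v (z + indVec {a}) - multilinear v z := by
  classical
  induction S using Finset.induction_on with
  | empty =>
    have : indVec (∅ : Finset G) = 0 := by funext j; simp [indVec]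
    simp [this]
  | @insert b S' hbS' ih =>
    have hab : a ≠ b := fun h => haS (h ▸ Finset.mem_insert_self b S')
    have haS' : a ∉ S' := fun h => haS (Finset.mem_insert_of_mem h)
    set z' : G → ℝ := z + indVec S' with hz'
    have hzS' : ∀ k ∈ S', z k = 0 := fun k hk =>
      hz k (Finset.mem_insert_of_mem (Finset.mem_insert_of_mem hk))
    have h01' : ∀ j, 0 ≤ z' j ∧ z' j ≤ 1 := by
      intro j
      by_cases hj : j ∈ S'
      · simp [hz', indVec, hj, hzS' j hj]
      · simp only [hz', Pi.add_apply, indVec, hj, if_false, add_zero]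
        exact h01 j
    have hza : z' a = 0 := by
      simp [hz', indVec, haS', hz a (Finset.mem_insert_self a _)]
    have hzb : z' b = 0 := by
      simp [hz', indVec, hbS',
        hz b (Finset.mem_insert_of_mem (Finset.mem_insert_self b S'))]
    have hpair := multilinear_pair v hsub z' h01' a b hab hza hzb
    have e1 : z' + indVec {a, b} = z + indVec (insert a (insert b S')) := by
      rw [hz', show insert a (insert b S') = S' ∪ {a, b} by
        ext k; simp only [Finset.mem_insert, Finset.mem_union, Finset.mem_singleton]; tauto,
        indVec_union S' {a, b} (by
          simp only [Finset.disjoint_insert_right, Finset.disjoint_singleton_right]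
          exact ⟨haS', hbS'⟩)]
      ring
    have e2 : z' + indVec {a} = z + indVec (insert a S') := by
      rw [hz', show insert a S' = S' ∪ {a} by
        ext k; simp only [Finset.mem_insert, Finset.mem_union, Finset.mem_singleton]; tauto,
        indVec_union S' {a} (by simpa using haS')]
      ring
    have e3 : z' + indVec {b} = z + indVec (insert b S') := by
      rw [hz', show insert b S' = S' ∪ {b} by
        ext k; simp only [Finset.mem_insert, Finset.mem_union, Finset.mem_singleton]; tauto,
        indVec_union S' {b} (by simpa using hbS')]
      ring
    rw [e1, e2, e3] at hpair
    have hih := ih haS' (fun k hk => hz k (by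
      simp only [Finset.mem_insert] at hk ⊢; tauto))
    linarith

lemma multilinear_chain {G : Type*} [Fintype G] [DecidableEq G] (v : Finset G → ℝ)
    (hsub : ∀ S T : Finset G, v (S ∩ T) + v (S ∪ T) ≤ v S + v T)
    (z : G → ℝ) (h01 : ∀ j, 0 ≤ z j ∧ z j ≤ 1) (S : Finset G)
    (hz : ∀ k ∈ S, z k = 0) :
    multilinear v (z + indVec S)
      ≤ multilinear v z
        + ∑ j ∈ S, (multilinear v (z + indVec {j}) - multilinear v z) := by
  classical
  induction S using Finset.induction_on with
  | empty =>
    have : indVec (∅ : Finset G) = 0 := by funext j; simp [indVec]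
    simp [this]
  | @insert a S' haS' ih =>
    have hmarg := multilinear_marginal v hsub z h01 a S' haS' hz
    have hih := ih (fun k hk => hz k (Finset.mem_insert_of_mem hk))
    rw [Finset.sum_insert haS']
    linarith

lemma cube_le_three_pow : ∀ k : ℕ, k ^ 3 ≤ 3 ^ k := by
  intro k
  induction k with
  | zero => norm_num
  | succ n ih =>
    rcases Nat.lt_or_ge n 3 with h | h
    · interval_cases n <;> norm_num
    · calc (n + 1) ^ 3 ≤ 3 * n ^ 3 := by nlinarith [h, sq_nonneg n, Nat.one_le_iff_ne_zero.mpr (by omega : n ≠ 0)]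
        _ ≤ 3 * 3 ^ n := Nat.mul_le_mul_left 3 ih
        _ = 3 ^ (n + 1) := by ring

/- ======================= main theorem ======================= -/

/-- restricting the allocation of `H` to a matching loses at most a
factor `3^{1/3}` in the Nash Social Welfare objective of the mixed relaxation. -/
theorem matching_loses_cubeRootThree {A G : Type*} [Fintype A] [Fintype G] [DecidableEq A]
    [DecidableEq G] (v : A → Finset G → ℝ)
    (hnn : ∀ i S, 0 ≤ v i S) (hmono : ∀ i, Monotone (v i)) (hsub : ∀ i, Submodular (v i))
    (H : Finset G) (hH : H.card = Fintype.card A)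
    (Hpart : A → Finset G)
    (hdisj : ∀ i i', i ≠ i' → Disjoint (Hpart i) (Hpart i'))
    (hcover : Finset.univ.biUnion Hpart = H)
    (y : A → G → ℝ) (hy01 : ∀ i j, 0 ≤ y i j ∧ y i j ≤ 1)
    (hyH : ∀ i, ∀ j ∈ H, y i j = 0)
    (hfeas : ∀ j ∉ H, ∑ i : A, y i j ≤ 1) :
    ∃ σ : A → G, Function.Injective σ ∧ (∀ i, σ i ∈ H) ∧
      (∏ i : A, multilinear (v i) (y i + indVec {σ i})) ^ ((1 : ℝ) / Fintype.card A)
        ≥ (3 : ℝ) ^ (-(1 : ℝ) / 3) *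
          (∏ i : A, multilinear (v i) (y i + indVec (Hpart i))) ^ ((1 : ℝ) / Fintype.card A) := by
  classical
  rcases isEmpty_or_nonempty A with hA | hA
  · refine ⟨fun i => isEmptyElim i, fun i => isEmptyElim i, fun i => isEmptyElim i, ?_⟩
    have hcA : (Fintype.card A : ℝ) = 0 := by simp [Fintype.card_eq_zero]
    rw [Finset.univ_eq_empty, Finset.prod_empty, Finset.prod_empty, hcA]
    simp only [div_zero, Real.rpow_zero, mul_one, ge_iff_le]
    apply Real.rpow_le_one_of_one_le_of_nonpos (by norm_num) (by norm_num)
  -- main case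
  have hn : 0 < Fintype.card A := Fintype.card_pos
  set n := Fintype.card A with hn_def
  have hHsub : ∀ i, Hpart i ⊆ H := by
    intro i
    rw [← hcover]
    exact Finset.subset_biUnion_of_mem Hpart (Finset.mem_univ i)
  have hy01' : ∀ i, ∀ j, 0 ≤ (y i + indVec (Hpart i)) j ∧ (y i + indVec (Hpart i)) j ≤ 1 := by
    intro i j
    by_cases hj : j ∈ Hpart i
    · simp [indVec, hj, hyH i j (hHsub i hj)]
    · simp only [Pi.add_apply, indVec, hj, if_false, add_zero]
      exact hy01 i j
  have hy01'' : ∀ i (j : G), j ∈ H → ∀ j', 0 ≤ (y i + indVec {j}) j' ∧ (y i + indVec {j}) j' ≤ 1 := by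
    intro i j hj j'
    by_cases hj' : j' ∈ ({j} : Finset G)
    · rw [Finset.mem_singleton] at hj'
      subst hj'
      simp [indVec, hyH i j' hj]
    · simp only [Pi.add_apply, indVec, hj', if_false, add_zero]
      exact hy01 i j'
  -- choose the best singleton in each nonempty part
  set f : A → G → ℝ := fun i j => multilinear (v i) (y i + indVec {j}) with hf
  have hGne : Nonempty G := by
    have : 0 < H.card := hH ▸ hn
    obtain ⟨g, hg⟩ := Finset.card_pos.mp this
    exact ⟨g⟩
  have hchoice : ∀ i : A, ∃ j : G,
      (Hpart i).Nonempty → (j ∈ Hpart i ∧ ∀ j' ∈ Hpart i, f i j' ≤ f i j) := by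
    intro i
    by_cases h : (Hpart i).Nonempty
    · obtain ⟨j, hj1, hj2⟩ := Finset.exists_max_image (Hpart i) (f i) h
      exact ⟨j, fun _ => ⟨hj1, hj2⟩⟩
    · exact ⟨Classical.arbitrary G, fun h' => absurd h' h⟩
  choose τ hτ using hchoice
  set B : Finset A := Finset.univ.filter (fun i => (Hpart i).Nonempty) with hB
  have hτinj : Set.InjOn τ B := by
    intro i hi i' hi' heq
    by_contra hne
    have h1 : τ i ∈ Hpart i := (hτ i (Finset.mem_filter.mp hi).2).1
    have h2 : τ i' ∈ Hpart i' := (hτ i' (Finset.mem_filter.mp hi').2).1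
    exact (Finset.disjoint_left.mp (hdisj i i' hne) h1) (heq ▸ h2)
  set Used : Finset G := B.image τ with hUsed
  have hUsedH : Used ⊆ H := by
    intro j hj
    obtain ⟨i, hi, rfl⟩ := Finset.mem_image.mp hj
    exact hHsub i (hτ i (Finset.mem_filter.mp hi).2).1
  have hUsedCard : Used.card = B.card := Finset.card_image_of_injOn hτinj
  set R : Finset G := H \ Used with hR
  have hRcard : R.card = n - B.card := by
    rw [hR, Finset.card_sdiff_of_subset hUsedH, hUsedCard, hH]
  set Bc : Finset A := Finset.univ.filter (fun i => ¬ (Hpart i).Nonempty) with hBc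
  have hBcCard : Bc.card = n - B.card := by
    have h2 := Finset.card_filter_add_card_filter_not
      (s := Finset.univ (α := A)) (p := fun i => (Hpart i).Nonempty)
    rw [Finset.card_univ, ← hB, ← hBc] at h2
    omega
  have hcards : Bc.card = R.card := by rw [hBcCard, hRcard]
  set e : {x // x ∈ Bc} ≃ {x // x ∈ R} := Finset.equivOfCardEq hcards with he
  set σ : A → G := fun i =>
    if h : (Hpart i).Nonempty then τ i
    else (e ⟨i, Finset.mem_filter.mpr ⟨Finset.mem_univ i, h⟩⟩ : G) with hσ
  have hσH : ∀ i, σ i ∈ H := by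
    intro i
    rw [hσ]
    by_cases h : (Hpart i).Nonempty
    · simp only [h, dif_pos]
      exact hHsub i (hτ i h).1
    · simp only [h, dif_neg, not_false_iff]
      have := (e ⟨i, Finset.mem_filter.mpr ⟨Finset.mem_univ i, h⟩⟩).2
      exact (Finset.mem_sdiff.mp this).1
  have hσinj : Function.Injective σ := by
    intro i i' heq
    rw [hσ] at heq
    by_cases h1 : (Hpart i).Nonempty <;> by_cases h2 : (Hpart i').Nonempty
    · simp only [h1, h2, dif_pos] at heq
      exact hτinj (Finset.mem_filter.mpr ⟨Finset.mem_univ i, h1⟩)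
        (Finset.mem_filter.mpr ⟨Finset.mem_univ i', h2⟩) heq
    · simp only [h1, h2, dif_pos, dif_neg, not_false_iff] at heq
      exfalso
      have hmem : τ i ∈ Used :=
        Finset.mem_image_of_mem τ (Finset.mem_filter.mpr ⟨Finset.mem_univ i, h1⟩)
      have := (e ⟨i', Finset.mem_filter.mpr ⟨Finset.mem_univ i', h2⟩⟩).2
      exact (Finset.mem_sdiff.mp this).2 (heq ▸ hmem)
    · simp only [h1, h2, dif_pos, dif_neg, not_false_iff] at heq
      exfalso
      have hmem : τ i' ∈ Used :=
        Finset.mem_image_of_mem τ (Finset.mem_filter.mpr ⟨Finset.mem_univ i', h2⟩)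
      have := (e ⟨i, Finset.mem_filter.mpr ⟨Finset.mem_univ i, h1⟩⟩).2
      exact (Finset.mem_sdiff.mp this).2 (heq ▸ hmem)
    · simp only [h1, h2, dif_neg, not_false_iff] at heq
      have := e.injective (Subtype.coe_injective heq)
      exact congrArg Subtype.val this
  refine ⟨σ, hσinj, hσH, ?_⟩
  -- per-agent inequality
  set P : A → ℝ := fun i => multilinear (v i) (y i + indVec (Hpart i)) with hP
  set M : A → ℝ := fun i => multilinear (v i) (y i + indVec {σ i}) with hM
  set k : A → ℕ := fun i => if (Hpart i).Nonempty then (Hpart i).card else 1 with hk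
  have hPnn : ∀ i, 0 ≤ P i := fun i =>
    multilinear_nonneg (v i) (hnn i) _ (hy01' i)
  have hMnn : ∀ i, 0 ≤ M i := fun i =>
    multilinear_nonneg (v i) (hnn i) _ (hy01'' i (σ i) (hσH i))
  have hkey : ∀ i, P i ≤ (k i : ℝ) * M i := by
    intro i
    by_cases h : (Hpart i).Nonempty
    · have hchain := multilinear_chain (v i) (hsub i) (y i) (hy01 i) (Hpart i)
        (fun j hj => hyH i j (hHsub i hj))
      have hbase : 0 ≤ multilinear (v i) (y i) := by
        apply multilinear_nonneg (v i) (hnn i) _ (hy01 i)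
      have hσi : σ i = τ i := by rw [hσ]; simp [h]
      have hmax : ∀ j ∈ Hpart i, multilinear (v i) (y i + indVec {j}) ≤ M i := by
        intro j hj
        have hMi : M i = f i (σ i) := rfl
        rw [hMi, hσi]
        exact (hτ i h).2 j hj
      have hcard1 : 1 ≤ (Hpart i).card := Finset.card_pos.mpr h
      have hc1 : (1 : ℝ) ≤ ((Hpart i).card : ℝ) := by exact_mod_cast hcard1
      have hsum : ∑ j ∈ Hpart i, (multilinear (v i) (y i + indVec {j})
          - multilinear (v i) (y i))
          ≤ ((Hpart i).card : ℝ) * (M i - multilinear (v i) (y i)) := by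
        calc ∑ j ∈ Hpart i, (multilinear (v i) (y i + indVec {j})
              - multilinear (v i) (y i))
            ≤ ∑ _j ∈ Hpart i, (M i - multilinear (v i) (y i)) :=
              Finset.sum_le_sum (fun j hj => by linarith [hmax j hj])
          _ = ((Hpart i).card : ℝ) * (M i - multilinear (v i) (y i)) := by
              rw [Finset.sum_const, nsmul_eq_mul]
      have hki : (k i : ℝ) = ((Hpart i).card : ℝ) := by rw [hk]; simp [h]
      have hPi : P i = multilinear (v i) (y i + indVec (Hpart i)) := rfl
      rw [hki, hPi]
      have hprod0 : 0 ≤ (((Hpart i).card : ℝ) - 1) * multilinear (v i) (y i) :=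
        mul_nonneg (by linarith) hbase
      linarith
    · have hempty : Hpart i = ∅ := Finset.not_nonempty_iff_eq_empty.mp h
      have : P i = multilinear (v i) (y i) := by
        rw [hP]
        simp only [hempty, indVec_empty, add_zero]
      rw [this, hk]
      simp only [h, if_false, Nat.cast_one, one_mul]
      rw [hM]
      exact multilinear_mono_single (v i) (hmono i) (y i) (hy01 i) (σ i)
        (hyH i (σ i) (hσH i))
  -- product inequalities
  have hprod1 : ∏ i : A, P i ≤ ∏ i : A, ((k i : ℝ) * M i) :=
    Finset.prod_le_prod (fun i _ => hPnn i) (fun i _ => hkey i)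
  have hprodsplit : ∏ i : A, ((k i : ℝ) * M i)
      = (∏ i : A, (k i : ℝ)) * ∏ i : A, M i := Finset.prod_mul_distrib
  set K : ℕ := ∏ i : A, k i with hK
  have hkK : ((K : ℕ) : ℝ) = ∏ i : A, (k i : ℝ) := by
    rw [hK]; push_cast; rfl
  have hsumcard : ∑ i : A, (Hpart i).card = n := by
    rw [← hH, ← hcover]
    exact (Finset.card_biUnion (fun i _ i' _ hne => hdisj i i' hne)).symm
  have hK3 : K ^ 3 ≤ 3 ^ n := by
    calc K ^ 3 = ∏ i : A, (k i) ^ 3 := by rw [hK, ← Finset.prod_pow]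
      _ ≤ ∏ i : A, 3 ^ (Hpart i).card := by
          apply Finset.prod_le_prod'
          intro i _
          by_cases h : (Hpart i).Nonempty
          · rw [hk]; simp only [h, if_true]
            exact cube_le_three_pow _
          · rw [hk]
            simp only [h, if_false]
            rw [Finset.not_nonempty_iff_eq_empty.mp h]
            norm_num
      _ = 3 ^ (∑ i : A, (Hpart i).card) := by rw [Finset.prod_pow_eq_pow_sum]
      _ = 3 ^ n := by rw [hsumcard]
  set p : ℝ := ∏ i : A, P i with hp_def
  set m : ℝ := ∏ i : A, M i with hm_def
  have hp : 0 ≤ p := Finset.prod_nonneg (fun i _ => hPnn i)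
  have hm : 0 ≤ m := Finset.prod_nonneg (fun i _ => hMnn i)
  have hpKm : p ≤ (K : ℝ) * m := by
    rw [hkK]
    calc p ≤ ∏ i : A, ((k i : ℝ) * M i) := hprod1
      _ = (∏ i : A, (k i : ℝ)) * m := hprodsplit
  have hcast : ((K : ℝ)) ^ (3 : ℕ) ≤ ((3 : ℝ)) ^ (n : ℕ) := by exact_mod_cast hK3
  have hnne : ((n : ℝ)) ≠ 0 := by positivity
  have e1 : ((K : ℝ)) ^ ((1 : ℝ) / n) = (((K : ℝ)) ^ (3 : ℕ)) ^ ((1 : ℝ) / (3 * n)) := by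
    rw [← Real.rpow_natCast (K : ℝ) 3, ← Real.rpow_mul (Nat.cast_nonneg K)]
    congr 1
    push_cast
    field_simp
  have e2 : ((3 : ℝ)) ^ ((1 : ℝ) / 3) = (((3 : ℝ)) ^ (n : ℕ)) ^ ((1 : ℝ) / (3 * n)) := by
    rw [← Real.rpow_natCast (3 : ℝ) n, ← Real.rpow_mul (by norm_num)]
    congr 1
    push_cast
    field_simp
  have hK13 : ((K : ℝ)) ^ ((1 : ℝ) / n) ≤ (3 : ℝ) ^ ((1 : ℝ) / 3) := by
    rw [e1, e2]
    exact Real.rpow_le_rpow (pow_nonneg (Nat.cast_nonneg K) 3) hcast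
      (div_nonneg zero_le_one (by positivity))
  have h3pos : (0 : ℝ) < (3 : ℝ) ^ (-(1 : ℝ) / 3) := Real.rpow_pos_of_pos (by norm_num) _
  rw [ge_iff_le]
  calc (3 : ℝ) ^ (-(1 : ℝ) / 3) * p ^ ((1 : ℝ) / n)
      ≤ (3 : ℝ) ^ (-(1 : ℝ) / 3) * (((K : ℝ)) ^ ((1 : ℝ) / n) * m ^ ((1 : ℝ) / n)) := by
        apply mul_le_mul_of_nonneg_left _ h3pos.le
        calc p ^ ((1 : ℝ) / n) ≤ ((K : ℝ) * m) ^ ((1 : ℝ) / n) :=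
              Real.rpow_le_rpow hp hpKm (by positivity)
          _ = ((K : ℝ)) ^ ((1 : ℝ) / n) * m ^ ((1 : ℝ) / n) :=
              Real.mul_rpow (Nat.cast_nonneg K) hm
    _ ≤ (3 : ℝ) ^ (-(1 : ℝ) / 3) * ((3 : ℝ) ^ ((1 : ℝ) / 3) * m ^ ((1 : ℝ) / n)) := by
        apply mul_le_mul_of_nonneg_left _ h3pos.le
        exact mul_le_mul_of_nonneg_right hK13 (Real.rpow_nonneg hm _)
    _ = m ^ ((1 : ℝ) / n) := by
        rw [← mul_assoc, ← Real.rpow_add (by norm_num : (0 : ℝ) < 3)]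
        norm_num
end

section
/- Let n be a positive multiple of 3 and let G be the disjoint union of sets H and G' with |H| = |G'| = n. Let A consist of n agents: n/3 agents whose valuation is v(S) = |S ∩ H|, and 2n/3 agents whose valuation is v'(S) = min(|S|, 1). Then: (a) there exists a partition (T_i)_{i∈A} of G with ∏_{i∈A} v_i(T_i) = 3^{n/3}; and (b) for every y ∈ [0,1]^{A×G'} with ∑_{i∈A} y_{ij} ≤ 1 for each j ∈ G' and every injection σ : A → H, ∏_{i∈A} V_i(y_i + 1_{σ(i)}) ≤ 1, where V_i is the multilinear extension of the valuation v_i of agent i (with y_i extended by 0 on H). -/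
open Finset

lemma sum_prods {G : Type*} [Fintype G] [DecidableEq G] (x : G → ℝ) :
    ∑ S : Finset G, (∏ j ∈ S, x j) * ∏ j ∈ Sᶜ, (1 - x j) = 1 := by
  have h := Finset.prod_add x (fun j => 1 - x j) (Finset.univ : Finset G)
  simp only [add_sub_cancel, Finset.prod_const_one, Finset.powerset_univ] at h
  simp only [Finset.compl_eq_univ_sdiff]
  exact h.symm

lemma multilinear_eq_one' {G : Type*} [Fintype G] [DecidableEq G]
    (v : Finset G → ℝ) (x : G → ℝ)
    (h : ∀ S : Finset G, v S = 1 ∨ (∏ j ∈ S, x j) * ∏ j ∈ Sᶜ, (1 - x j) = 0) :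
    (∑ S : Finset G, v S * ((∏ j ∈ S, x j) * ∏ j ∈ Sᶜ, (1 - x j))) = 1 := by
  conv_rhs => rw [← sum_prods x]
  apply Finset.sum_congr rfl
  intro S _
  rcases h S with h1 | h0
  · rw [h1, one_mul]
  · rw [h0, mul_zero]

/-- tightness of the `3^{1/3}` factor. The ground set is
`G = H ⊕ G'` with `H` the left copy of `Fin n` and `G'` the right copy. The
first `n/3` agents have valuation `S ↦ |S ∩ H|`; the remaining `2n/3` agents
have valuation `S ↦ min(|S|,1)`.
(a) Some partition of `G` achieves product of values `3^{n/3}`.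
(b) Every fractional assignment of `G'` combined with a matching of `H` has
product of (multilinearly extended) values at most `1`. -/
theorem tightness_of_cubeRootThree (n : ℕ) (hn : 0 < n) (h3 : 3 ∣ n)
    (v : Fin n → Finset (Fin n ⊕ Fin n) → ℝ)
    (hv1 : ∀ i : Fin n, (i : ℕ) < n / 3 →
      ∀ S, v i S = ((S ∩ Finset.univ.image Sum.inl).card : ℝ))
    (hv2 : ∀ i : Fin n, ¬ (i : ℕ) < n / 3 →
      ∀ S, v i S = ((min S.card 1 : ℕ) : ℝ)) :
    (∃ T : Fin n → Finset (Fin n ⊕ Fin n),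
        (∀ i i', i ≠ i' → Disjoint (T i) (T i')) ∧
        Finset.univ.biUnion T = Finset.univ ∧
        ∏ i : Fin n, v i (T i) = 3 ^ (n / 3)) ∧
    (∀ y : Fin n → (Fin n ⊕ Fin n) → ℝ,
        (∀ i j, 0 ≤ y i j ∧ y i j ≤ 1) →
        (∀ i j, y i (Sum.inl j) = 0) →
        (∀ j : Fin n, ∑ i : Fin n, y i (Sum.inr j) ≤ 1) →
        ∀ σ : Fin n → Fin n, Function.Injective σ →
          ∏ i : Fin n, multilinear (v i) (y i + indVec {Sum.inl (σ i)}) ≤ 1) := by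
  obtain ⟨m, hnm⟩ := h3
  have hm : 0 < m := by omega
  have hdiv : n / 3 = m := by omega
  constructor
  · -- Part (a)
    refine ⟨fun i => if (i : ℕ) < n / 3
        then (Finset.univ.filter fun j : Fin n => (j : ℕ)/3 = (i : ℕ)).image Sum.inl
        else (Finset.univ.filter fun j : Fin n =>
          n/3 + (j : ℕ) % (2*(n/3)) = (i : ℕ)).image Sum.inr, ?_, ?_, ?_⟩
    · -- disjoint
      intro i i' hii
      rw [Finset.disjoint_left]
      intro a hai hai'
      by_cases h1 : (i : ℕ) < n / 3 <;> by_cases h2 : (i' : ℕ) < n / 3 <;>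
        simp only [h1, h2, if_true, if_false, Finset.mem_image, Finset.mem_filter,
          Finset.mem_univ, true_and] at hai hai'
      · obtain ⟨j, hj, rfl⟩ := hai
        obtain ⟨j', hj', hjj⟩ := hai'
        have : j' = j := Sum.inl_injective hjj
        subst this
        exact hii (Fin.ext (by omega))
      · obtain ⟨j, hj, rfl⟩ := hai
        obtain ⟨j', hj', hjj⟩ := hai'
        exact absurd hjj (by simp)
      · obtain ⟨j, hj, rfl⟩ := hai
        obtain ⟨j', hj', hjj⟩ := hai'
        exact absurd hjj (by simp)
      · obtain ⟨j, hj, rfl⟩ := hai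
        obtain ⟨j', hj', hjj⟩ := hai'
        have : j' = j := Sum.inr_injective hjj
        subst this
        exact hii (Fin.ext (by omega))
    · -- union
      apply Finset.eq_univ_of_forall
      intro a
      rw [Finset.mem_biUnion]
      match a with
      | Sum.inl j =>
        refine ⟨⟨(j : ℕ)/3, by omega⟩, Finset.mem_univ _, ?_⟩
        have hc : ((⟨(j : ℕ)/3, by omega⟩ : Fin n) : ℕ) < n / 3 := by
          simp; omega
        simp only [hc, if_true, Finset.mem_image, Finset.mem_filter, Finset.mem_univ,
          true_and]
        exact ⟨j, rfl, rfl⟩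
      | Sum.inr j =>
        have hmod : (j : ℕ) % (2*(n/3)) < 2*(n/3) := Nat.mod_lt _ (by omega)
        refine ⟨⟨n/3 + (j : ℕ) % (2*(n/3)), by omega⟩, Finset.mem_univ _, ?_⟩
        have hc : ¬ ((⟨n/3 + (j : ℕ) % (2*(n/3)), by omega⟩ : Fin n) : ℕ) < n / 3 := by
          simp
        simp only [hc, if_false, Finset.mem_image, Finset.mem_filter, Finset.mem_univ,
          true_and]
        exact ⟨j, rfl, rfl⟩
    · -- product value
      have hval : ∀ i : Fin n, v i
          (if (i : ℕ) < n / 3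
          then (Finset.univ.filter fun j : Fin n => (j : ℕ)/3 = (i : ℕ)).image Sum.inl
          else (Finset.univ.filter fun j : Fin n =>
            n/3 + (j : ℕ) % (2*(n/3)) = (i : ℕ)).image Sum.inr)
          = if (i : ℕ) < n / 3 then (3 : ℝ) else 1 := by
        intro i
        by_cases h1 : (i : ℕ) < n / 3 <;> simp only [h1, if_true, if_false]
        · rw [hv1 i h1]
          set s := (Finset.univ.filter fun j : Fin n => (j : ℕ)/3 = (i : ℕ))
          have hsub : s.image Sum.inl ⊆ (Finset.univ.image Sum.inl : Finset (Fin n ⊕ Fin n)) := by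
            intro a ha
            simp only [Finset.mem_image] at ha ⊢
            obtain ⟨j, _, rfl⟩ := ha
            exact ⟨j, Finset.mem_univ _, rfl⟩
          rw [Finset.inter_eq_left.mpr hsub,
            Finset.card_image_of_injective _ Sum.inl_injective]
          have hcard : s.card = 3 := by
            apply Finset.card_eq_of_bijective (fun k hk => ⟨3*(i : ℕ)+k, by omega⟩)
            · intro a ha
              simp only [s, Finset.mem_filter, Finset.mem_univ, true_and] at ha
              refine ⟨(a : ℕ) % 3, by omega, ?_⟩
              apply Fin.ext
              simp
              omega
            · intro k hk
              simp [s]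
              omega
            · intro k k' hk hk' h
              have := congrArg Fin.val h
              simp at this
              omega
          rw [hcard]
          norm_num
        · rw [hv2 i h1]
          have hne : (Finset.univ.filter fun j : Fin n =>
              n/3 + (j : ℕ) % (2*(n/3)) = (i : ℕ)).Nonempty := by
            refine ⟨⟨(i : ℕ) - n/3, by omega⟩, ?_⟩
            simp only [Finset.mem_filter, Finset.mem_univ, true_and]
            show n/3 + ((i : ℕ) - n/3) % (2*(n/3)) = (i : ℕ)
            have heq : ((i : ℕ) - n/3) % (2*(n/3)) = (i : ℕ) - n/3 :=
              Nat.mod_eq_of_lt (by omega)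
            omega
          have hpos : 0 < ((Finset.univ.filter fun j : Fin n =>
              n/3 + (j : ℕ) % (2*(n/3)) = (i : ℕ)).image (Sum.inr : Fin n → Fin n ⊕ Fin n)).card := by
            rw [Finset.card_image_of_injective _ Sum.inr_injective]
            exact Finset.card_pos.mpr hne
          rw [min_eq_right (by omega)]
          norm_num
      rw [Finset.prod_congr rfl (fun i _ => hval i), Finset.prod_ite,
        Finset.prod_const, Finset.prod_const, one_pow, mul_one]
      congr 1
      apply Finset.card_eq_of_bijective (fun k hk => ⟨k, by omega⟩)
      · intro a ha
        simp only [Finset.mem_filter, Finset.mem_univ, true_and] at ha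
        exact ⟨a, by omega, rfl⟩
      · intro k hk
        simp
        omega
      · intro k k' hk hk' h
        simpa using congrArg Fin.val h
  · -- Part (b)
    intro y hy01 hyl hsum σ hσ
    have hone : ∀ i : Fin n,
        multilinear (v i) (y i + indVec {Sum.inl (σ i)}) = 1 := by
      intro i
      set x : (Fin n ⊕ Fin n) → ℝ := y i + indVec {Sum.inl (σ i)} with hx
      have hx1 : x (Sum.inl (σ i)) = 1 := by
        simp [hx, indVec, hyl]
      have hx0 : ∀ k : Fin n, k ≠ σ i → x (Sum.inl k) = 0 := by
        intro k hk
        simp [hx, indVec, hyl, hk]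
      rw [multilinear]
      apply multilinear_eq_one'
      intro S
      by_cases h1 : (i : ℕ) < n / 3
      · by_cases hmem : Sum.inl (σ i) ∈ S
        · by_cases hex : ∃ k : Fin n, k ≠ σ i ∧ Sum.inl k ∈ S
          · right
            obtain ⟨k, hk, hkS⟩ := hex
            rw [Finset.prod_eq_zero hkS (hx0 k hk), zero_mul]
          · left
            rw [hv1 i h1]
            push_neg at hex
            have : S ∩ Finset.univ.image Sum.inl = {Sum.inl (σ i)} := by
              ext a
              simp only [Finset.mem_inter, Finset.mem_image, Finset.mem_univ, true_and,
                Finset.mem_singleton]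
              constructor
              · rintro ⟨haS, k, rfl⟩
                by_contra hne
                exact (hex k (fun h => hne (by rw [h]))) haS
              · rintro rfl
                exact ⟨hmem, σ i, rfl⟩
            rw [this]
            simp
        · right
          have : Sum.inl (σ i) ∈ Sᶜ := Finset.mem_compl.mpr hmem
          rw [Finset.prod_eq_zero this (by rw [hx1]; ring), mul_zero]
      · rcases S.eq_empty_or_nonempty with rfl | hne
        · right
          rw [Finset.prod_empty, one_mul]
          apply Finset.prod_eq_zero
            (Finset.mem_compl.mpr (Finset.notMem_empty (Sum.inl (σ i))))
          rw [hx1]; ring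
        · left
          rw [hv2 i h1, min_eq_right (Finset.card_pos.mpr hne)]
          norm_num
    rw [Finset.prod_congr rfl (fun i _ => hone i), Finset.prod_const_one]
end

section
/- Let A' be a finite set of n agents, each with a nonnegative monotone submodular valuation v_i on a finite item set G' with v_i(G') > 0, and let V_i be the multilinear extension of v_i. Then there exists y ∈ [0,1]^{A'×G'} with ∑_{i∈A'} y_{ij} ≤ 1 for every j ∈ G' and V_i(y_i) > 0 for every i, such that for every y* ∈ [0,1]^{A'×G'} with ∑_{i∈A'} y*_{ij} ≤ 1 for every j ∈ G', one has (1/n) ∑_{i∈A'} V_i(y*_i)/V_i(y_i) ≤ e. -/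
open Finset

namespace ICGaux

set_option linter.unusedSectionVars false

variable {G : Type*} [Fintype G] [DecidableEq G]

/-- restricted multilinear form -/
noncomputable def mlin (t : Finset G) (w : Finset G → ℝ) (x : G → ℝ) : ℝ :=
  ∑ S ∈ t.powerset, w S * ((∏ k ∈ S, x k) * ∏ k ∈ t \ S, (1 - x k))

lemma multilinear_eq_mlin (v : Finset G → ℝ) (x : G → ℝ) :
    multilinear v x = mlin Finset.univ v x := by
  rw [multilinear, mlin, Finset.powerset_univ]
  exact Finset.sum_congr rfl fun S _ => by rw [Finset.compl_eq_univ_sdiff]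

lemma mlin_congr {t : Finset G} {w : Finset G → ℝ} {x x' : G → ℝ}
    (h : ∀ k ∈ t, x k = x' k) : mlin t w x = mlin t w x' := by
  refine Finset.sum_congr rfl fun S hS => ?_
  rw [Finset.mem_powerset] at hS
  congr 1
  congr 1
  · exact Finset.prod_congr rfl fun k hk => h k (hS hk)
  · exact Finset.prod_congr rfl fun k hk => by rw [h k (Finset.mem_sdiff.1 hk).1]

lemma mlin_nonneg {t : Finset G} {w : Finset G → ℝ} {x : G → ℝ}
    (hw : ∀ S ⊆ t, 0 ≤ w S) (hx : ∀ k ∈ t, 0 ≤ x k ∧ x k ≤ 1) : 0 ≤ mlin t w x := by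
  refine Finset.sum_nonneg fun S hS => ?_
  rw [Finset.mem_powerset] at hS
  refine mul_nonneg (hw S hS) (mul_nonneg ?_ ?_)
  · exact Finset.prod_nonneg fun k hk => (hx k (hS hk)).1
  · exact Finset.prod_nonneg fun k hk => by
      have := (hx k (Finset.mem_sdiff.1 hk).1).2; linarith

lemma mlin_nonpos {t : Finset G} {w : Finset G → ℝ} {x : G → ℝ}
    (hw : ∀ S ⊆ t, w S ≤ 0) (hx : ∀ k ∈ t, 0 ≤ x k ∧ x k ≤ 1) : mlin t w x ≤ 0 := by
  have h1 := mlin_nonneg (w := fun S => - w S) (t := t) (x := x)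
    (fun S hS => by simpa using hw S hS) hx
  have hneg : mlin t (fun S => - w S) x = - mlin t w x := by
    rw [mlin, mlin, ← Finset.sum_neg_distrib]
    exact Finset.sum_congr rfl fun S _ => by ring
  rw [hneg] at h1; linarith

lemma mlin_linear (t : Finset G) (w₁ w₂ : Finset G → ℝ) (c : ℝ) (x : G → ℝ) :
    mlin t (fun S => w₁ S + c * w₂ S) x = mlin t w₁ x + c * mlin t w₂ x := by
  rw [mlin, mlin, mlin, Finset.mul_sum, ← Finset.sum_add_distrib]
  exact Finset.sum_congr rfl fun S _ => by ring

lemma mlin_insert {s : Finset G} {j : G} (hj : j ∉ s) (w : Finset G → ℝ) (x : G → ℝ) :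
    mlin (insert j s) w x =
      mlin s (fun S => (1 - x j) * w S + x j * w (insert j S)) x := by
  rw [mlin, Finset.sum_powerset_insert hj, mlin, ← Finset.sum_add_distrib]
  refine Finset.sum_congr rfl fun S hS => ?_
  rw [Finset.mem_powerset] at hS
  have hjS : j ∉ S := fun h => hj (hS h)
  have h1 : insert j s \ S = insert j (s \ S) := by
    ext k; simp only [Finset.mem_sdiff, Finset.mem_insert]
    constructor
    · rintro ⟨rfl | h1, h2⟩
      · exact Or.inl rfl
      · exact Or.inr ⟨h1, h2⟩
    · rintro (rfl | ⟨h1, h2⟩)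
      · exact ⟨Or.inl rfl, hjS⟩
      · exact ⟨Or.inr h1, h2⟩
  have h2 : insert j s \ insert j S = s \ S := by
    ext k; simp only [Finset.mem_sdiff, Finset.mem_insert]
    constructor
    · rintro ⟨rfl | h1, h2⟩
      · exact absurd (Or.inl rfl) h2
      · exact ⟨h1, fun hk => h2 (Or.inr hk)⟩
    · rintro ⟨ha, hb⟩
      refine ⟨Or.inr ha, ?_⟩
      rintro (rfl | h)
      · exact hj ha
      · exact hb h
  have hjnot : j ∉ s \ S := fun h => hj (Finset.mem_sdiff.1 h).1
  rw [h1, h2, Finset.prod_insert hjnot, Finset.prod_insert hjS]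
  ring

lemma mlin_update {t : Finset G} {j : G} (hj : j ∈ t) (w : Finset G → ℝ) (x : G → ℝ) (b : ℝ) :
    mlin t w (Function.update x j b) =
      mlin (t.erase j) w x +
        b * mlin (t.erase j) (fun S => w (insert j S) - w S) x := by
  have h0 : mlin t w (Function.update x j b) =
      mlin (t.erase j)
        (fun S => (1 - b) * w S + b * w (insert j S)) (Function.update x j b) := by
    conv_lhs => rw [← Finset.insert_erase hj]
    rw [mlin_insert (Finset.notMem_erase j t), Function.update_self]
  rw [h0, mlin_congr (x' := x) (fun k hk =>
    Function.update_of_ne (Finset.ne_of_mem_erase hk) b x)]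
  have : (fun S => (1 - b) * w S + b * w (insert j S)) =
      fun S => w S + b * (w (insert j S) - w S) := by funext S; ring
  rw [this, mlin_linear]

/-- the discrete partial difference of the multilinear extension. -/
noncomputable def Dml (v : Finset G → ℝ) (j : G) (x : G → ℝ) : ℝ :=
  mlin (Finset.univ.erase j) (fun S => v (insert j S) - v S) x

lemma ml_update (v : Finset G → ℝ) (x : G → ℝ) (j : G) (b : ℝ) :
    multilinear v (Function.update x j b) =
      mlin (Finset.univ.erase j) v x + b * Dml v j x := by
  rw [multilinear_eq_mlin, mlin_update (Finset.mem_univ j), Dml]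

lemma ml_decomp (v : Finset G → ℝ) (x : G → ℝ) (j : G) :
    multilinear v x = mlin (Finset.univ.erase j) v x + x j * Dml v j x := by
  conv_lhs => rw [← Function.update_eq_self j x]
  exact ml_update v x j (x j)

lemma Dml_update_self (v : Finset G → ℝ) (x : G → ℝ) (j : G) (b : ℝ) :
    Dml v j (Function.update x j b) = Dml v j x :=
  mlin_congr fun k hk => Function.update_of_ne (Finset.ne_of_mem_erase hk) b x

lemma Dml_nonneg {v : Finset G → ℝ} (hmono : Monotone v) {x : G → ℝ}
    (hx : ∀ k, 0 ≤ x k ∧ x k ≤ 1) (j : G) : 0 ≤ Dml v j x :=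
  mlin_nonneg (fun S _ => sub_nonneg.2 (hmono (Finset.subset_insert j S)))
    (fun k _ => hx k)

lemma Dml_update (v : Finset G → ℝ) {j k : G} (hkj : k ≠ j) (x : G → ℝ) (b : ℝ) :
    Dml v j (Function.update x k b) =
      mlin ((Finset.univ.erase j).erase k) (fun S => v (insert j S) - v S) x +
        b * mlin ((Finset.univ.erase j).erase k)
          (fun S => (v (insert j (insert k S)) - v (insert k S)) - (v (insert j S) - v S)) x :=
  mlin_update (Finset.mem_erase.2 ⟨hkj, Finset.mem_univ k⟩) _ x b

lemma slope_nonpos {v : Finset G → ℝ} (hsub : Submodular v) {j k : G} (hkj : k ≠ j)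
    {S : Finset G} (hS : S ⊆ (Finset.univ.erase j).erase k) :
    (v (insert j (insert k S)) - v (insert k S)) - (v (insert j S) - v S) ≤ 0 := by
  have hjS : j ∉ S := fun h => by
    have := hS h; rw [Finset.mem_erase, Finset.mem_erase] at this; exact this.2.1 rfl
  have hkS : k ∉ S := fun h => by
    have := hS h; rw [Finset.mem_erase] at this; exact this.1 rfl
  have hint : insert j S ∩ insert k S = S := by
    ext a; simp only [Finset.mem_inter, Finset.mem_insert]
    constructor
    · rintro ⟨rfl | ha, hb | hb⟩
      · exact absurd hb.symm hkj
      · exact hb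
      · exact ha
      · exact ha
    · intro ha; exact ⟨Or.inr ha, Or.inr ha⟩
  have huni : insert j S ∪ insert k S = insert j (insert k S) := by
    ext a; simp only [Finset.mem_union, Finset.mem_insert]; tauto
  have := hsub (insert j S) (insert k S)
  rw [hint, huni] at this
  linarith

lemma Dml_antitone {v : Finset G → ℝ} (hsub : Submodular v) {y z : G → ℝ}
    (hy : ∀ k, 0 ≤ y k ∧ y k ≤ 1) (hz : ∀ k, 0 ≤ z k ∧ z k ≤ 1)
    (hyz : ∀ k, y k ≤ z k) (j : G) : Dml v j z ≤ Dml v j y := by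
  have key : ∀ s : Finset G,
      Dml v j (fun k => if k ∈ s then z k else y k) ≤ Dml v j y := by
    intro s
    induction s using Finset.induction_on with
    | empty => simp
    | @insert a s ha ih =>
      set f : G → ℝ := fun k => if k ∈ s then z k else y k with hf
      have hfb : ∀ k, 0 ≤ f k ∧ f k ≤ 1 := by
        intro k; rw [hf]; dsimp only; split
        · exact hz k
        · exact hy k
      have hupd : (fun k => if k ∈ insert a s then z k else y k)
          = Function.update f a (z a) := by
        funext k
        rcases eq_or_ne k a with rfl | hk
        · simp [Function.update_self]
        · simp [Function.update_of_ne hk, hf, Finset.mem_insert, hk]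
      rw [hupd]
      rcases eq_or_ne a j with rfl | haj
      · rw [Dml_update_self]; exact ih
      · have hm : mlin ((Finset.univ.erase j).erase a)
            (fun S => (v (insert j (insert a S)) - v (insert a S)) - (v (insert j S) - v S)) f
            ≤ 0 :=
          mlin_nonpos (fun S hS => slope_nonpos hsub haj hS) (fun k _ => hfb k)
        have h1 := Dml_update v haj f (z a)
        have h2 := Dml_update v haj f (y a)
        have hfa : f a = y a := by rw [hf]; simp [ha]
        have h3 : Function.update f a (y a) = f := by rw [← hfa]; exact Function.update_eq_self a f
        rw [h3] at h2
        have : Dml v j (Function.update f a (z a)) ≤ Dml v j f := by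
          rw [h1, h2]
          nlinarith [hm, hyz a]
        exact this.trans ih
  have := key Finset.univ
  simpa using this

lemma ml_monotone {v : Finset G → ℝ} (hmono : Monotone v) {y z : G → ℝ}
    (hy : ∀ k, 0 ≤ y k ∧ y k ≤ 1) (hz : ∀ k, 0 ≤ z k ∧ z k ≤ 1)
    (hyz : ∀ k, y k ≤ z k) : multilinear v y ≤ multilinear v z := by
  have key : ∀ s : Finset G,
      multilinear v y ≤ multilinear v (fun k => if k ∈ s then z k else y k) := by
    intro s
    induction s using Finset.induction_on with
    | empty => simp
    | @insert a s ha ih =>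
      set f : G → ℝ := fun k => if k ∈ s then z k else y k with hf
      have hfb : ∀ k, 0 ≤ f k ∧ f k ≤ 1 := by
        intro k; rw [hf]; dsimp only; split
        · exact hz k
        · exact hy k
      have hupd : (fun k => if k ∈ insert a s then z k else y k)
          = Function.update f a (z a) := by
        funext k
        rcases eq_or_ne k a with rfl | hk
        · simp [Function.update_self]
        · simp [Function.update_of_ne hk, hf, Finset.mem_insert, hk]
      rw [hupd]
      have hfa : f a = y a := by rw [hf]; simp [ha]
      have h3 : Function.update f a (y a) = f := by rw [← hfa]; exact Function.update_eq_self a f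
      have h1 := ml_update v f a (z a)
      have h2 := ml_update v f a (y a)
      rw [h3] at h2
      have hD := Dml_nonneg hmono hfb a
      have : multilinear v f ≤ multilinear v (Function.update f a (z a)) := by
        rw [h1, h2]
        nlinarith [hyz a]
      exact ih.trans this
  have := key Finset.univ
  simpa using this

lemma ml_linearize_upper {v : Finset G → ℝ} (hmono : Monotone v) (hsub : Submodular v)
    {y z : G → ℝ} (hy : ∀ k, 0 ≤ y k ∧ y k ≤ 1) (hz : ∀ k, 0 ≤ z k ∧ z k ≤ 1) :
    multilinear v z ≤ multilinear v y + ∑ j : G, z j * Dml v j y := by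
  set m : G → ℝ := fun k => max (y k) (z k) with hm
  have hmb : ∀ k, 0 ≤ m k ∧ m k ≤ 1 := fun k =>
    ⟨le_trans (hy k).1 (le_max_left _ _), max_le (hy k).2 (hz k).2⟩
  have h1 : multilinear v z ≤ multilinear v m :=
    ml_monotone hmono hz hmb fun k => le_max_right _ _
  have key : ∀ s : Finset G,
      multilinear v (fun k => if k ∈ s then m k else y k) ≤
        multilinear v y + ∑ j ∈ s, (m j - y j) * Dml v j y := by
    intro s
    induction s using Finset.induction_on with
    | empty => simp
    | @insert a s ha ih =>
      set f : G → ℝ := fun k => if k ∈ s then m k else y k with hf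
      have hfb : ∀ k, 0 ≤ f k ∧ f k ≤ 1 := by
        intro k; rw [hf]; dsimp only; split
        · exact hmb k
        · exact hy k
      have hyf : ∀ k, y k ≤ f k := by
        intro k; rw [hf]; dsimp only; split
        · exact le_max_left _ _
        · exact le_refl _
      have hupd : (fun k => if k ∈ insert a s then m k else y k)
          = Function.update f a (m a) := by
        funext k
        rcases eq_or_ne k a with rfl | hk
        · simp [Function.update_self]
        · simp [Function.update_of_ne hk, hf, Finset.mem_insert, hk]
      rw [hupd]
      have hfa : f a = y a := by rw [hf]; simp [ha]
      have h3 : Function.update f a (y a) = f := by rw [← hfa]; exact Function.update_eq_self a f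
      have e1 := ml_update v f a (m a)
      have e2 := ml_update v f a (y a)
      rw [h3] at e2
      have hanti : Dml v a f ≤ Dml v a y := Dml_antitone hsub hy hfb hyf a
      have hma : 0 ≤ m a - y a := by simp [hm, le_max_left]
      have : multilinear v (Function.update f a (m a)) ≤
          multilinear v f + (m a - y a) * Dml v a y := by
        rw [e1, e2]; nlinarith
      rw [Finset.sum_insert ha]
      calc multilinear v (Function.update f a (m a))
          ≤ multilinear v f + (m a - y a) * Dml v a y := this
        _ ≤ multilinear v y + ∑ j ∈ s, (m j - y j) * Dml v j y
              + (m a - y a) * Dml v a y := by linarith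
        _ = multilinear v y + ((m a - y a) * Dml v a y
              + ∑ j ∈ s, (m j - y j) * Dml v j y) := by ring
  have h2 := key Finset.univ
  have h4 : (fun k => if k ∈ (Finset.univ : Finset G) then m k else y k) = m := by
    funext k; simp
  rw [h4] at h2
  refine h1.trans (h2.trans ?_)
  have : ∑ j : G, (m j - y j) * Dml v j y ≤ ∑ j : G, z j * Dml v j y := by
    refine Finset.sum_le_sum fun j _ => ?_
    have hD := Dml_nonneg hmono hy j
    have : m j - y j ≤ z j := by
      have := max_le_iff (a := y j) (b := z j) (c := y j + z j)
      simp only [hm]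
      have h5 : max (y j) (z j) ≤ y j + z j := max_le (by linarith [(hz j).1]) (by linarith [(hy j).1])
      linarith
    exact mul_le_mul_of_nonneg_right this hD
  linarith

lemma ml_zero (v : Finset G → ℝ) : multilinear v (fun _ => (0:ℝ)) = v ∅ := by
  rw [multilinear]
  rw [Finset.sum_eq_single ∅]
  · simp
  · intro S _ hne
    obtain ⟨k, hk⟩ := Finset.nonempty_iff_ne_empty.2 hne
    have : (∏ j ∈ S, (0:ℝ)) = 0 := Finset.prod_eq_zero hk rfl
    rw [this]; ring
  · intro h; exact absurd (Finset.mem_univ ∅) h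

lemma ml_self_lower {v : Finset G → ℝ} (hnn : ∀ S, 0 ≤ v S) (hsub : Submodular v)
    {y : G → ℝ} (hy : ∀ k, 0 ≤ y k ∧ y k ≤ 1) :
    ∑ j : G, y j * Dml v j y ≤ multilinear v y := by
  have key : ∀ s : Finset G,
      multilinear v (fun k => if k ∈ s then 0 else y k) + ∑ j ∈ s, y j * Dml v j y ≤
        multilinear v y := by
    intro s
    induction s using Finset.induction_on with
    | empty => simp
    | @insert a s ha ih =>
      set f : G → ℝ := fun k => if k ∈ s then 0 else y k with hf
      have hfb : ∀ k, 0 ≤ f k ∧ f k ≤ 1 := by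
        intro k; rw [hf]; dsimp only; split
        · exact ⟨le_refl _, zero_le_one⟩
        · exact hy k
      have hfy : ∀ k, f k ≤ y k := by
        intro k; rw [hf]; dsimp only; split
        · exact (hy k).1
        · exact le_refl _
      have hupd : (fun k => if k ∈ insert a s then (0:ℝ) else y k)
          = Function.update f a 0 := by
        funext k
        rcases eq_or_ne k a with rfl | hk
        · simp [Function.update_self]
        · simp [Function.update_of_ne hk, hf, Finset.mem_insert, hk]
      rw [hupd]
      have hfa : f a = y a := by rw [hf]; simp [ha]
      have h3 : Function.update f a (y a) = f := by rw [← hfa]; exact Function.update_eq_self a f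
      have e1 := ml_update v f a 0
      have e2 := ml_update v f a (y a)
      rw [h3] at e2
      have hanti : Dml v a y ≤ Dml v a f := Dml_antitone hsub hfb hy hfy a
      rw [Finset.sum_insert ha]
      have : multilinear v (Function.update f a 0) + y a * Dml v a y ≤ multilinear v f := by
        rw [e1, e2]
        nlinarith [(hy a).1]
      linarith
  have h := key Finset.univ
  have h4 : (fun k => if k ∈ (Finset.univ : Finset G) then (0:ℝ) else y k) = fun _ => (0:ℝ) := by
    funext k; simp
  rw [h4, ml_zero] at h
  have := hnn ∅
  linarith

lemma Dml_eq_sub (v : Finset G → ℝ) (x : G → ℝ) (j : G) :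
    Dml v j x =
      multilinear v (Function.update x j 1) - multilinear v (Function.update x j 0) := by
  rw [ml_update, ml_update]; ring

lemma ml_eval_one (v : Finset G → ℝ) (x : G → ℝ) (j : G) :
    multilinear v (Function.update x j 1) =
      ∑ S : Finset G, v S *
        (if j ∈ S then (∏ k ∈ S.erase j, x k) * ∏ k ∈ Sᶜ, (1 - x k) else 0) := by
  rw [multilinear]
  refine Finset.sum_congr rfl fun S _ => ?_
  by_cases hj : j ∈ S
  · rw [if_pos hj]
    congr 1
    congr 1
    · rw [Finset.prod_update_of_mem hj, one_mul, ← Finset.erase_eq]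
    · refine Finset.prod_congr rfl fun k hk => ?_
      have : k ≠ j := fun h => by
        subst h; exact (Finset.mem_compl.1 hk) hj
      rw [Function.update_of_ne this]
  · rw [if_neg hj]
    have hjc : j ∈ Sᶜ := Finset.mem_compl.2 hj
    have : (∏ k ∈ Sᶜ, (1 - Function.update x j 1 k)) = 0 :=
      Finset.prod_eq_zero hjc (by simp)
    rw [this]; ring

lemma ml_eval_zero (v : Finset G → ℝ) (x : G → ℝ) (j : G) :
    multilinear v (Function.update x j 0) =
      ∑ S : Finset G, v S *
        (if j ∈ S then 0 else (∏ k ∈ S, x k) * ∏ k ∈ Sᶜ.erase j, (1 - x k)) := by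
  rw [multilinear]
  refine Finset.sum_congr rfl fun S _ => ?_
  by_cases hj : j ∈ S
  · rw [if_pos hj]
    have : (∏ k ∈ S, Function.update x j 0 k) = 0 :=
      Finset.prod_eq_zero hj (by simp)
    rw [this]; ring
  · rw [if_neg hj]
    have hjc : j ∈ Sᶜ := Finset.mem_compl.2 hj
    congr 1
    congr 1
    · exact Finset.prod_congr rfl fun k hk =>
        Function.update_of_ne (fun h => by subst h; exact hj hk) 0 x
    · have heq : (fun k => 1 - Function.update x j 0 k)
          = Function.update (fun k => 1 - x k) j 1 := by
        funext k
        rcases eq_or_ne k j with rfl | hk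
        · simp
        · rw [Function.update_of_ne hk, Function.update_of_ne hk]
      calc (∏ k ∈ Sᶜ, (1 - Function.update x j 0 k))
          = ∏ k ∈ Sᶜ, Function.update (fun k => 1 - x k) j 1 k := by rw [heq]
        _ = 1 * ∏ k ∈ Sᶜ.erase j, (1 - x k) := by
            rw [Finset.prod_update_of_mem hjc, ← Finset.erase_eq]
        _ = ∏ k ∈ Sᶜ.erase j, (1 - x k) := one_mul _

lemma ml_hasDerivAt (v : Finset G → ℝ) (x d : G → ℝ) :
    HasDerivAt (fun t : ℝ => multilinear v (fun j => x j + t * d j))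
      (∑ j : G, d j * Dml v j x) 0 := by
  have hP : ∀ S : Finset G, HasDerivAt (fun t : ℝ => ∏ k ∈ S, (x k + t * d k))
      (∑ k ∈ S, (∏ l ∈ S.erase k, x l) * d k) 0 := by
    intro S
    have := HasDerivAt.fun_finsetProd (u := S) (f := fun k t => x k + t * d k)
      (f' := fun k => d k) (x := 0) (fun k _ => ((hasDerivAt_mul_const (d k)).const_add (x k)))
    simpa using this
  have hQ : ∀ S : Finset G, HasDerivAt (fun t : ℝ => ∏ k ∈ Sᶜ, (1 - (x k + t * d k)))
      (∑ k ∈ Sᶜ, (∏ l ∈ Sᶜ.erase k, (1 - x l)) * (-d k)) 0 := by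
    intro S
    have := HasDerivAt.fun_finsetProd (u := Sᶜ) (f := fun k t => 1 - (x k + t * d k))
      (f' := fun k => -d k) (x := 0)
      (fun k _ => (((hasDerivAt_mul_const (d k)).const_add (x k)).const_sub 1))
    simpa using this
  have hsum : HasDerivAt
      (fun t : ℝ => ∑ S : Finset G,
        v S * ((∏ k ∈ S, (x k + t * d k)) * ∏ k ∈ Sᶜ, (1 - (x k + t * d k))))
      (∑ S : Finset G, v S *
        ((∑ k ∈ S, (∏ l ∈ S.erase k, x l) * d k) * (∏ k ∈ Sᶜ, (1 - x k)) +
          (∏ k ∈ S, x k) * (∑ k ∈ Sᶜ, (∏ l ∈ Sᶜ.erase k, (1 - x l)) * (-d k)))) 0 := by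
    refine HasDerivAt.fun_sum fun S _ => ?_
    have h := ((hP S).mul (hQ S)).const_mul (v S)
    have hv1 : (∏ k ∈ S, (x k + 0 * d k)) = ∏ k ∈ S, x k :=
      Finset.prod_congr rfl fun k _ => by ring
    have hv2 : (∏ k ∈ Sᶜ, (1 - (x k + 0 * d k))) = ∏ k ∈ Sᶜ, (1 - x k) :=
      Finset.prod_congr rfl fun k _ => by ring
    rw [hv1, hv2] at h
    exact h
  have hE : (∑ S : Finset G, v S *
        ((∑ k ∈ S, (∏ l ∈ S.erase k, x l) * d k) * (∏ k ∈ Sᶜ, (1 - x k)) +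
          (∏ k ∈ S, x k) * (∑ k ∈ Sᶜ, (∏ l ∈ Sᶜ.erase k, (1 - x l)) * (-d k))))
      = ∑ j : G, d j * Dml v j x := by
    have hR : ∀ j : G, d j * Dml v j x =
        ∑ S : Finset G, (d j * (v S *
          (if j ∈ S then (∏ k ∈ S.erase j, x k) * ∏ k ∈ Sᶜ, (1 - x k) else 0))
        - d j * (v S *
          (if j ∈ S then 0 else (∏ k ∈ S, x k) * ∏ k ∈ Sᶜ.erase j, (1 - x k)))) := by
      intro j
      rw [Dml_eq_sub, ml_eval_one, ml_eval_zero, mul_sub, Finset.mul_sum, Finset.mul_sum,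
        ← Finset.sum_sub_distrib]
    rw [Finset.sum_congr rfl fun j _ => hR j, Finset.sum_comm]
    refine Finset.sum_congr rfl fun S _ => ?_
    rw [← Finset.sum_add_sum_compl S (fun j => d j * (v S * _) - d j * (v S * _))]
    have e1 : ∑ j ∈ S, (d j * (v S *
          (if j ∈ S then (∏ k ∈ S.erase j, x k) * ∏ k ∈ Sᶜ, (1 - x k) else 0))
        - d j * (v S *
          (if j ∈ S then 0 else (∏ k ∈ S, x k) * ∏ k ∈ Sᶜ.erase j, (1 - x k))))
        = v S * ((∑ k ∈ S, (∏ l ∈ S.erase k, x l) * d k) * (∏ k ∈ Sᶜ, (1 - x k))) := by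
      rw [Finset.sum_mul, Finset.mul_sum]
      refine Finset.sum_congr rfl fun j hj => ?_
      rw [if_pos hj, if_pos hj]
      ring
    have e2 : ∑ j ∈ Sᶜ, (d j * (v S *
          (if j ∈ S then (∏ k ∈ S.erase j, x k) * ∏ k ∈ Sᶜ, (1 - x k) else 0))
        - d j * (v S *
          (if j ∈ S then 0 else (∏ k ∈ S, x k) * ∏ k ∈ Sᶜ.erase j, (1 - x k))))
        = v S * ((∏ k ∈ S, x k) * (∑ k ∈ Sᶜ, (∏ l ∈ Sᶜ.erase k, (1 - x l)) * (-d k))) := by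
      rw [Finset.mul_sum, Finset.mul_sum]
      refine Finset.sum_congr rfl fun j hj => ?_
      have hjS : j ∉ S := Finset.mem_compl.1 hj
      rw [if_neg hjS, if_neg hjS]
      ring
    rw [e1, e2]
    ring
  rw [← hE]
  simpa only [multilinear] using hsum

lemma ml_continuous (v : Finset G → ℝ) : Continuous fun x : G → ℝ => multilinear v x := by
  simp only [multilinear]
  exact continuous_finset_sum _ fun S _ =>
    continuous_const.mul ((continuous_finset_prod _ fun j _ => continuous_apply j).mul
      (continuous_finset_prod _ fun j _ => continuous_const.sub (continuous_apply j)))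

lemma ml_nonneg' {v : Finset G → ℝ} (hnn : ∀ S, 0 ≤ v S) {x : G → ℝ}
    (hx : ∀ k, 0 ≤ x k ∧ x k ≤ 1) : 0 ≤ multilinear v x := by
  rw [multilinear_eq_mlin]
  exact mlin_nonneg (fun S _ => hnn S) (fun k _ => hx k)

end ICGaux

open ICGaux

/-- guarantee of the Iterated Continuous Greedy algorithm: there exists a
feasible fractional solution `y` such that every feasible `y*` satisfies
`(1/n) ∑_i V_i(y*_i)/V_i(y_i) ≤ e`. -/
theorem iteratedContinuousGreedy_guarantee {A G : Type*} [Fintype A] [Fintype G]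
    [DecidableEq G] (v : A → Finset G → ℝ)
    (hnn : ∀ i S, 0 ≤ v i S) (hmono : ∀ i, Monotone (v i)) (hsub : ∀ i, Submodular (v i))
    (hpos : ∀ i, 0 < v i Finset.univ) :
    ∃ y : A → G → ℝ,
      (∀ i j, 0 ≤ y i j ∧ y i j ≤ 1) ∧
      (∀ j : G, ∑ i : A, y i j ≤ 1) ∧
      (∀ i, 0 < multilinear (v i) (y i)) ∧
      ∀ ystar : A → G → ℝ,
        (∀ i j, 0 ≤ ystar i j ∧ ystar i j ≤ 1) →
        (∀ j : G, ∑ i : A, ystar i j ≤ 1) →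
        (1 / (Fintype.card A : ℝ)) *
            ∑ i : A, multilinear (v i) (ystar i) / multilinear (v i) (y i)
          ≤ Real.exp 1 := by
  classical
  rcases isEmpty_or_nonempty A with hA | hA
  · refine ⟨fun _ _ => 0, fun i => (hA.false i).elim, fun j => by simp, fun i => (hA.false i).elim,
      fun ys _ _ => ?_⟩
    rw [Finset.univ_eq_empty, Finset.sum_empty, mul_zero]
    exact (Real.exp_pos 1).le
  · set n : ℕ := Fintype.card A with hn
    have hn1 : 1 ≤ n := Fintype.card_pos
    have hnR : (0:ℝ) < n := by exact_mod_cast Fintype.card_pos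
    -- feasible set
    set K : Set (A → G → ℝ) :=
      {y | (∀ i j, 0 ≤ y i j ∧ y i j ≤ 1) ∧ ∀ j, ∑ i, y i j ≤ 1} with hK
    have hKc : IsCompact K := by
      have h1 : IsCompact (Set.univ.pi fun _ : A => Set.univ.pi fun _ : G => Set.Icc (0:ℝ) 1) :=
        isCompact_univ_pi fun _ => isCompact_univ_pi fun _ => isCompact_Icc
      have h2 : IsClosed (⋂ j : G, {y : A → G → ℝ | ∑ i, y i j ≤ 1}) :=
        isClosed_iInter fun j => isClosed_le
          (continuous_finset_sum _ fun i _ => (continuous_apply j).comp (continuous_apply i))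
          continuous_const
      have hKeq : K = (Set.univ.pi fun _ : A => Set.univ.pi fun _ : G => Set.Icc (0:ℝ) 1) ∩
          (⋂ j : G, {y : A → G → ℝ | ∑ i, y i j ≤ 1}) := by
        ext z
        constructor
        · rintro ⟨hb, hs⟩
          exact ⟨Set.mem_univ_pi.2 fun i => Set.mem_univ_pi.2 fun j => Set.mem_Icc.2 (hb i j),
            Set.mem_iInter.2 hs⟩
        · rintro ⟨hb, hs⟩
          exact ⟨fun i j => Set.mem_Icc.1 (Set.mem_univ_pi.1 (Set.mem_univ_pi.1 hb i) j),
            fun j => Set.mem_iInter.1 hs j⟩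
      rw [hKeq]
      exact h1.inter_right h2
    set P : (A → G → ℝ) → ℝ := fun y => ∏ i, multilinear (v i) (y i) with hP
    have hPc : Continuous P :=
      continuous_finset_prod _ fun i _ => (ml_continuous (v i)).comp (continuous_apply i)
    -- the uniform point
    set y0 : A → G → ℝ := fun _ _ => 1 / n with hy0
    have hy0b : ∀ i j, 0 ≤ y0 i j ∧ y0 i j ≤ 1 := by
      intro i j
      constructor
      · positivity
      · rw [hy0, div_le_one hnR]; exact_mod_cast hn1
    have hy0K : y0 ∈ K := by
      refine ⟨hy0b, fun j => ?_⟩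
      have h1 : ∑ i : A, y0 i j = (n : ℝ) * (1 / n) := by
        rw [Finset.sum_const, Finset.card_univ, nsmul_eq_mul]
      rw [h1, mul_one_div, div_self hnR.ne']
    have hy0pos : ∀ i, 0 < multilinear (v i) (y0 i) := by
      intro i
      rw [multilinear]
      have hterm : ∀ S : Finset G, 0 ≤ v i S * ((∏ j ∈ S, y0 i j) * ∏ j ∈ Sᶜ, (1 - y0 i j)) := by
        intro S
        refine mul_nonneg (hnn i S) (mul_nonneg ?_ ?_)
        · exact Finset.prod_nonneg fun j _ => (hy0b i j).1
        · exact Finset.prod_nonneg fun j _ => by linarith [(hy0b i j).2]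
      have hm := Finset.single_le_sum (f := fun S : Finset G =>
        v i S * ((∏ j ∈ S, y0 i j) * ∏ j ∈ Sᶜ, (1 - y0 i j)))
        (fun S _ => hterm S) (Finset.mem_univ Finset.univ)
      refine lt_of_lt_of_le ?_ hm
      simp only [Finset.compl_univ, Finset.prod_empty, mul_one]
      exact mul_pos (hpos i) (Finset.prod_pos fun j _ => one_div_pos.2 hnR)
    have hP0pos : 0 < P y0 := Finset.prod_pos fun i _ => hy0pos i
    obtain ⟨y, hyK, hymax⟩ := hKc.exists_isMaxOn ⟨y0, hy0K⟩ hPc.continuousOn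
    have hyb : ∀ i j, 0 ≤ y i j ∧ y i j ≤ 1 := hyK.1
    have hPy : 0 < P y := lt_of_lt_of_le hP0pos (hymax hy0K)
    have hVnn : ∀ i, 0 ≤ multilinear (v i) (y i) := fun i =>
      ml_nonneg' (hnn i) (fun k => hyb i k)
    have hVpos : ∀ i, 0 < multilinear (v i) (y i) := by
      intro i
      rcases lt_or_eq_of_le (hVnn i) with h | h
      · exact h
      · exfalso
        have : P y = 0 := Finset.prod_eq_zero (Finset.mem_univ i) h.symm
        rw [this] at hPy; exact lt_irrefl 0 hPy
    refine ⟨y, hyb, hyK.2, hVpos, ?_⟩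
    intro ys hys1 hys2
    have hysK : ys ∈ K := ⟨hys1, hys2⟩
    set d : A → G → ℝ := fun i j => ys i j - y i j with hd
    set c : A → ℝ := fun i => ∑ j, d i j * Dml (v i) j (y i) with hc
    -- first-order condition
    have hfo : ∑ i, c i / multilinear (v i) (y i) ≤ 0 := by
      set φ : ℝ → ℝ := fun t => ∏ i, multilinear (v i) (fun j => y i j + t * d i j) with hφ
      have hder : HasDerivAt φ
          (∑ i, (∏ i' ∈ Finset.univ.erase i, multilinear (v i') (y i')) * c i) 0 := by
        have h0 := HasDerivAt.fun_finsetProd (u := (Finset.univ : Finset A))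
          (f := fun i t => multilinear (v i) (fun j => y i j + t * d i j))
          (f' := fun i => c i) (x := 0)
          (fun i _ => ml_hasDerivAt (v i) (y i) (d i))
        have heq : ∀ i' : A, multilinear (v i') (fun j => y i' j + 0 * d i' j)
            = multilinear (v i') (y i') := by
          intro i'; congr 1; funext j; ring
        simp only [smul_eq_mul] at h0
        have hrw : (∑ i, (∏ i' ∈ Finset.univ.erase i,
              multilinear (v i') (fun j => y i' j + 0 * d i' j)) * c i)
            = ∑ i, (∏ i' ∈ Finset.univ.erase i, multilinear (v i') (y i')) * c i :=
          Finset.sum_congr rfl fun i _ => by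
            rw [Finset.prod_congr rfl fun i' _ => heq i']
        rw [hrw] at h0
        exact h0
      have hle : ∀ t ∈ Set.Ioc (0:ℝ) 1, φ t ≤ φ 0 := by
        intro t ht
        have hzK : (fun i j => y i j + t * d i j) ∈ K := by
          constructor
          · intro i j
            have h1 := (hyb i j).1; have h2 := (hyb i j).2
            have h3 := (hys1 i j).1; have h4 := (hys1 i j).2
            have hdij : d i j = ys i j - y i j := rfl
            constructor
            · show 0 ≤ y i j + t * d i j
              rw [hdij]
              nlinarith [mul_nonneg ht.1.le h3, mul_nonneg (sub_nonneg.2 ht.2) h1]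
            · show y i j + t * d i j ≤ 1
              rw [hdij]
              nlinarith [mul_nonneg (sub_nonneg.2 ht.2) (sub_nonneg.2 h2),
                mul_nonneg ht.1.le (sub_nonneg.2 h4)]
          · intro j
            show ∑ i, (y i j + t * d i j) ≤ 1
            have hsum : ∑ i, (y i j + t * d i j)
                = (1 - t) * (∑ i, y i j) + t * (∑ i, ys i j) := by
              rw [Finset.sum_add_distrib, ← Finset.mul_sum]
              have hds : ∑ i, d i j = ∑ i, ys i j - ∑ i, y i j := by
                rw [← Finset.sum_sub_distrib]
              rw [hds]; ring
            rw [hsum]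
            have hA1 := hyK.2 j; have hA2 := hys2 j
            nlinarith [ht.1.le, ht.2]
        have := hymax hzK
        have hφ0 : φ 0 = P y := by
          rw [hφ]; simp only
          exact Finset.prod_congr rfl fun i _ => by congr 1; funext j; ring
        rw [hφ0]
        exact this
      -- derivative at right-endpoint max is ≤ 0
      have hslope : Filter.Tendsto (slope φ 0) (nhdsWithin 0 (Set.Ioi 0))
          (nhds (∑ i, (∏ i' ∈ Finset.univ.erase i, multilinear (v i') (y i')) * c i)) := by
        have h1 := hasDerivAt_iff_tendsto_slope.1 hder
        exact h1.mono_left (nhdsWithin_mono 0 (fun t ht => ne_of_gt ht))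
      have hcle : (∑ i, (∏ i' ∈ Finset.univ.erase i, multilinear (v i') (y i')) * c i) ≤ 0 := by
        refine le_of_tendsto hslope ?_
        filter_upwards [Ioc_mem_nhdsGT zero_lt_one] with t ht
        rw [slope_def_field]
        have h1 : φ t - φ 0 ≤ 0 := sub_nonpos.2 (hle t ht)
        have h2 : 0 ≤ t - 0 := by linarith [ht.1]
        exact div_nonpos_iff.2 (Or.inr ⟨h1, h2⟩)
      have hprodpos : ∀ i, (0:ℝ) < ∏ i' ∈ Finset.univ.erase i, multilinear (v i') (y i') :=
        fun i => Finset.prod_pos fun i' _ => hVpos i'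
      have hratio : ∀ i : A, c i / multilinear (v i) (y i)
          = ((∏ i' ∈ Finset.univ.erase i, multilinear (v i') (y i')) * c i) / P y := by
        intro i
        have hPyi : P y = (∏ i' ∈ Finset.univ.erase i, multilinear (v i') (y i'))
            * multilinear (v i) (y i) :=
          (Finset.prod_erase_mul Finset.univ _ (Finset.mem_univ i)).symm
        rw [hPyi, mul_div_mul_left _ _ (hprodpos i).ne']
      calc ∑ i, c i / multilinear (v i) (y i)
          = (∑ i, (∏ i' ∈ Finset.univ.erase i, multilinear (v i') (y i')) * c i) / P y := by
            rw [Finset.sum_div]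
            exact Finset.sum_congr rfl fun i _ => hratio i
        _ ≤ 0 := div_nonpos_iff.2 (Or.inr ⟨hcle, hPy.le⟩)
    -- final assembly
    have hkey : ∀ i, multilinear (v i) (ys i) / multilinear (v i) (y i)
        ≤ 1 + c i / multilinear (v i) (y i)
            + (∑ j, y i j * Dml (v i) j (y i)) / multilinear (v i) (y i) := by
      intro i
      have hVi := hVpos i
      have r1 := ml_linearize_upper (hmono i) (hsub i) (fun k => hyb i k) (fun k => hys1 i k)
      have hsplit : ∑ j, ys i j * Dml (v i) j (y i)
          = c i + ∑ j, y i j * Dml (v i) j (y i) := by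
        rw [hc, ← Finset.sum_add_distrib]
        refine Finset.sum_congr rfl fun j _ => ?_
        rw [hd]; ring
      rw [hsplit] at r1
      have h2 : multilinear (v i) (ys i) / multilinear (v i) (y i)
          ≤ (multilinear (v i) (y i) + (c i + ∑ j, y i j * Dml (v i) j (y i)))
              / multilinear (v i) (y i) := (div_le_div_iff_of_pos_right hVi).2 r1
      refine h2.trans (le_of_eq ?_)
      field_simp
      ring
    have hself : ∀ i, (∑ j, y i j * Dml (v i) j (y i)) / multilinear (v i) (y i) ≤ 1 := by
      intro i
      rw [div_le_one (hVpos i)]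
      exact ml_self_lower (hnn i) (hsub i) (fun k => hyb i k)
    have hsum2 : ∑ i, multilinear (v i) (ys i) / multilinear (v i) (y i) ≤ 2 * n := by
      calc ∑ i, multilinear (v i) (ys i) / multilinear (v i) (y i)
          ≤ ∑ i, (1 + c i / multilinear (v i) (y i)
              + (∑ j, y i j * Dml (v i) j (y i)) / multilinear (v i) (y i)) :=
            Finset.sum_le_sum fun i _ => hkey i
        _ = (n : ℝ) + (∑ i, c i / multilinear (v i) (y i))
              + ∑ i, (∑ j, y i j * Dml (v i) j (y i)) / multilinear (v i) (y i) := by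
            rw [Finset.sum_add_distrib, Finset.sum_add_distrib, Finset.sum_const,
              Finset.card_univ, ← hn, nsmul_eq_mul, mul_one]
        _ ≤ (n : ℝ) + 0 + ∑ i, (1:ℝ) := by
            have := Finset.sum_le_sum fun i (_ : i ∈ Finset.univ) => hself i
            gcongr
        _ = (n : ℝ) + 0 + (n : ℝ) := by
            rw [Finset.sum_const, Finset.card_univ, ← hn, nsmul_eq_mul, mul_one]
        _ = 2 * n := by ring
    have hfinal : (1 / (n : ℝ)) * ∑ i, multilinear (v i) (ys i) / multilinear (v i) (y i)
        ≤ 2 := by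
      have h1 : (1 / (n : ℝ)) * ∑ i, multilinear (v i) (ys i) / multilinear (v i) (y i)
          ≤ (1 / (n : ℝ)) * (2 * n) := by
        refine mul_le_mul_of_nonneg_left hsum2 ?_
        positivity
      have h2 : (1 / (n : ℝ)) * (2 * n) = 2 := by field_simp
      linarith
    have hexp : (2:ℝ) ≤ Real.exp 1 := by
      have := Real.add_one_le_exp 1
      linarith
    linarith
end

section
/- Let v be a nonnegative monotone submodular set function on a finite ground set G with v(∅) = 0 and multilinear extension V, let x ∈ [0,1]^G and c > 0. Let j_1, …, j_k be distinct elements of G chosen greedily, i.e., for each t, j_t maximizes V(x^{(L_{t−1})} + 1_j) − V(x^{(L_{t−1})}) over all j ∈ G ∖ L_{t−1}, where L_t = {j_1, …, j_t} and L_0 = ∅. If ∑_{t=1}^{k} x_{j_t} ≥ c, then for every j ∈ G ∖ L_k, V(x^{(L_k)} + 1_j) − V(x^{(L_k)}) ≤ V(x^{(L_k)})/c. -/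
open Finset

/-- `x^{(S)}`: the vector equal to `x` on coordinates in `S` and `0` elsewhere. -/
def restr {G : Type*} [DecidableEq G] (x : G → ℝ) (S : Finset G) : G → ℝ :=
  fun j => if j ∈ S then x j else 0

namespace GreedyAux

variable {G : Type*} [Fintype G] [DecidableEq G]

noncomputable def ml (A : Finset G) (f : Finset G → ℝ) (x : G → ℝ) : ℝ :=
  ∑ S ∈ A.powerset, f S * ((∏ i ∈ S, x i) * ∏ i ∈ A \ S, (1 - x i))

lemma ml_congr {A : Finset G} {f : Finset G → ℝ} {x y : G → ℝ}
    (h : ∀ i ∈ A, x i = y i) : ml A f x = ml A f y := by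
  unfold ml
  refine Finset.sum_congr rfl fun S hS => ?_
  rw [Finset.mem_powerset] at hS
  have h1 : ∏ i ∈ S, x i = ∏ i ∈ S, y i :=
    Finset.prod_congr rfl fun i hi => h i (hS hi)
  have h2 : ∏ i ∈ A \ S, (1 - x i) = ∏ i ∈ A \ S, (1 - y i) :=
    Finset.prod_congr rfl fun i hi => by rw [h i (Finset.mem_sdiff.mp hi).1]
  rw [h1, h2]

lemma multilinear_eq_ml (v : Finset G → ℝ) (x : G → ℝ) :
    multilinear v x = ml Finset.univ v x := by
  unfold multilinear ml
  rw [Finset.powerset_univ]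
  refine Finset.sum_congr rfl fun S _ => ?_
  rw [Finset.compl_eq_univ_sdiff]

lemma ml_sub (A : Finset G) (f g : Finset G → ℝ) (x : G → ℝ) :
    ml A (fun S => f S - g S) x = ml A f x - ml A g x := by
  unfold ml
  rw [← Finset.sum_sub_distrib]
  exact Finset.sum_congr rfl fun S _ => by ring

lemma ml_nonneg {A : Finset G} {f : Finset G → ℝ} {x : G → ℝ}
    (hf : ∀ S ⊆ A, 0 ≤ f S) (hx : ∀ i, 0 ≤ x i ∧ x i ≤ 1) : 0 ≤ ml A f x := by
  refine Finset.sum_nonneg fun S hS => ?_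
  rw [Finset.mem_powerset] at hS
  refine mul_nonneg (hf S hS) (mul_nonneg ?_ ?_)
  · exact Finset.prod_nonneg fun i _ => (hx i).1
  · exact Finset.prod_nonneg fun i _ => by linarith [(hx i).2]

lemma ml_nonpos {A : Finset G} {f : Finset G → ℝ} {x : G → ℝ}
    (hf : ∀ S ⊆ A, f S ≤ 0) (hx : ∀ i, 0 ≤ x i ∧ x i ≤ 1) : ml A f x ≤ 0 := by
  have := ml_nonneg (A := A) (f := fun S => -f S) (x := x)
    (fun S hS => by simpa using hf S hS) hx
  have h2 : ml A (fun S => -f S) x = - ml A f x := by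
    unfold ml
    rw [← Finset.sum_neg_distrib]
    exact Finset.sum_congr rfl fun S _ => by ring
  linarith [h2 ▸ this]

lemma ml_step {A : Finset G} {j : G} (hj : j ∈ A) (f : Finset G → ℝ) (x : G → ℝ) :
    ml A f x = ml (A.erase j) f x
      + x j * ml (A.erase j) (fun S => f (insert j S) - f S) x := by
  have hjB : j ∉ A.erase j := Finset.notMem_erase j A
  unfold ml
  rw [Finset.mul_sum, ← Finset.sum_add_distrib]
  conv_lhs => rw [← Finset.insert_erase hj]
  rw [Finset.sum_powerset_insert hjB, ← Finset.sum_add_distrib]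
  refine Finset.sum_congr rfl fun S hS => ?_
  rw [Finset.mem_powerset] at hS
  have hjS : j ∉ S := fun h => hjB (hS h)
  have e1 : insert j (A.erase j) \ S = insert j (A.erase j \ S) :=
    Finset.insert_sdiff_of_notMem _ hjS
  have e2 : insert j (A.erase j) \ insert j S = A.erase j \ S := by
    ext a
    simp only [Finset.mem_sdiff, Finset.mem_insert, not_or]
    constructor
    · rintro ⟨h1 | h1, h2, h3⟩
      · exact absurd h1 h2
      · exact ⟨h1, h3⟩
    · rintro ⟨h1, h2⟩
      exact ⟨Or.inr h1, fun h => hjB (h ▸ h1), h2⟩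
  have hjAS : j ∉ A.erase j \ S := fun h => hjB (Finset.mem_sdiff.mp h).1
  rw [e1, e2, Finset.prod_insert hjAS, Finset.prod_insert hjS]
  ring

variable {v : Finset G → ℝ}

/-- marginal of coordinate j: `V(x[j:=1]) - V(x[j:=0])` as an `ml` sum. -/
noncomputable def marg (jj : G) (v : Finset G → ℝ) (x : G → ℝ) : ℝ :=
  ml (Finset.univ.erase jj) (fun S => v (insert jj S) - v S) x

lemma multilinear_affine (jj : G) (x : G → ℝ) :
    multilinear v x = ml (Finset.univ.erase jj) v x + x jj * marg jj v x := by
  rw [multilinear_eq_ml, ml_step (Finset.mem_univ jj) v x]; rfl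

lemma marg_congr {jj : G} {x y : G → ℝ} (h : ∀ i, i ≠ jj → x i = y i) :
    marg jj v x = marg jj v y :=
  ml_congr fun i hi => h i (Finset.ne_of_mem_erase hi)

/-- the marginal as a difference of multilinear values, when `y jj = 0`. -/
lemma marg_eq {jj : G} {y : G → ℝ} (hy : y jj = 0) :
    multilinear v (y + indVec {jj}) - multilinear v y = marg jj v y := by
  have hcongr : ∀ i, i ≠ jj → (y + indVec {jj}) i = y i := by
    intro i hi
    simp [indVec, Pi.add_apply, hi]
  have h1 : (y + indVec {jj}) jj = 1 := by simp [indVec, Pi.add_apply, hy]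
  rw [multilinear_affine jj (y + indVec {jj}), multilinear_affine jj y, hy, h1,
    ml_congr (f := v) (fun i hi => hcongr i (Finset.ne_of_mem_erase hi)),
    marg_congr (v := v) hcongr]
  ring

/-- single-coordinate monotonicity of marginal, from submodularity. -/
lemma marg_update_le (hsub : Submodular v) (jj i : G) {w : G → ℝ}
    (hw : ∀ a, 0 ≤ w a ∧ w a ≤ 1) {s t : ℝ} (hst : s ≤ t) :
    marg jj v (Function.update w i t) ≤ marg jj v (Function.update w i s) := by
  by_cases hij : i = jj
  · subst hij
    have : ∀ u : ℝ, marg i v (Function.update w i u) = marg i v w := fun u =>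
      marg_congr fun a ha => Function.update_of_ne ha _ _
    rw [this s, this t]
  · have hiE : i ∈ Finset.univ.erase jj := Finset.mem_erase.mpr ⟨hij, Finset.mem_univ i⟩
    set E' := (Finset.univ.erase jj).erase i with hE'
    set g : Finset G → ℝ := fun S => v (insert jj S) - v S with hg
    have key : ∀ u : ℝ, marg jj v (Function.update w i u) =
        ml E' g w + u * ml E' (fun S => g (insert i S) - g S) w := by
      intro u
      unfold marg
      rw [ml_step hiE g (Function.update w i u)]
      have hup : ∀ a ∈ E', Function.update w i u a = w a := fun a ha =>
        Function.update_of_ne (Finset.ne_of_mem_erase ha) _ _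
      rw [ml_congr hup, ml_congr hup, Function.update_self]
    rw [key s, key t]
    have hneg : ml E' (fun S => g (insert i S) - g S) w ≤ 0 := by
      refine ml_nonpos (fun S hS => ?_) hw
      have hiS : i ∉ S := fun h => (Finset.mem_erase.mp (hS h)).1 rfl
      have hjS : jj ∉ S := fun h =>
        (Finset.mem_erase.mp (Finset.mem_erase.mp (hS h)).2).1 rfl
      have hinter : insert i S ∩ insert jj S = S := by
        ext a
        simp only [Finset.mem_inter, Finset.mem_insert]
        constructor
        · rintro ⟨h1 | h1, h2 | h2⟩
          · exact absurd (h1.symm.trans h2) hij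
          · subst h1; exact absurd h2 hiS
          · subst h2; exact absurd h1 hjS
          · exact h1
        · exact fun h => ⟨Or.inr h, Or.inr h⟩
      have hunion : insert i S ∪ insert jj S = insert jj (insert i S) := by
        ext a
        simp only [Finset.mem_union, Finset.mem_insert]
        tauto
      have := hsub (insert i S) (insert jj S)
      rw [hinter, hunion] at this
      simp only [hg]
      linarith
    nlinarith [hneg, hst]

/-- monotone comparison of marginals. -/
lemma marg_anti (hsub : Submodular v) (jj : G) {y z : G → ℝ}
    (hy : ∀ i, 0 ≤ y i) (hz : ∀ i, z i ≤ 1) (hyz : ∀ i, y i ≤ z i) :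
    marg jj v z ≤ marg jj v y := by
  have hbdd : ∀ (T : Finset G) (a : G),
      0 ≤ (if a ∈ T then z a else y a) ∧ (if a ∈ T then z a else y a) ≤ 1 := by
    intro T a
    by_cases h : a ∈ T <;> simp [h]
    · exact ⟨le_trans (hy a) (hyz a), hz a⟩
    · exact ⟨hy a, le_trans (hyz a) (hz a)⟩
  have main : ∀ T : Finset G,
      marg jj v (fun i => if i ∈ T then z i else y i) ≤ marg jj v y := by
    intro T
    induction T using Finset.induction_on with
    | empty => simp
    | @insert a T ha ih =>
      set w : G → ℝ := fun i => if i ∈ T then z i else y i with hw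
      have hupd : (fun i => if i ∈ insert a T then z i else y i)
          = Function.update w a (z a) := by
        funext i
        by_cases h : i = a
        · subst h; simp [Function.update_self, hw]
        · simp [Function.update_of_ne h, hw, h]
      have hwa : w a = y a := by simp [hw, ha]
      have step : marg jj v (Function.update w a (z a))
          ≤ marg jj v (Function.update w a (y a)) :=
        marg_update_le hsub jj a (fun i => hbdd T i) (hyz a)
      have : Function.update w a (y a) = w := by
        rw [← hwa]; exact Function.update_eq_self a w
      rw [hupd]
      calc marg jj v (Function.update w a (z a))
          ≤ marg jj v (Function.update w a (y a)) := step
        _ = marg jj v w := by rw [this]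
        _ ≤ marg jj v y := ih
  have := main Finset.univ
  simpa using this

lemma restr_bounds {x : G → ℝ} (hx : ∀ a, 0 ≤ x a ∧ x a ≤ 1) (L : Finset G) :
    ∀ a, 0 ≤ restr x L a ∧ restr x L a ≤ 1 := by
  intro a
  unfold restr
  by_cases h : a ∈ L
  · simp only [if_pos h]; exact hx a
  · simp only [if_neg h]; exact ⟨le_refl 0, zero_le_one⟩

lemma restr_notMem {x : G → ℝ} {L : Finset G} {a : G} (h : a ∉ L) :
    restr x L a = 0 := by simp [restr, h]

lemma restr_mono {x : G → ℝ} (hx : ∀ a, 0 ≤ x a) {L M : Finset G} (h : L ⊆ M) :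
    ∀ a, restr x L a ≤ restr x M a := by
  intro a
  unfold restr
  by_cases hL : a ∈ L
  · simp [hL, h hL]
  · simp only [hL, if_neg]
    by_cases hM : a ∈ M <;> simp [hM, hx a]

lemma restr_insert (x : G → ℝ) (L : Finset G) (a : G) :
    restr x (insert a L) = Function.update (restr x L) a (x a) := by
  funext i
  by_cases h : i = a
  · subst h; simp [restr, Function.update_self]
  · simp [restr, Function.update_of_ne h, Finset.mem_insert, h]

lemma multilinear_restr_empty (v : Finset G → ℝ) (x : G → ℝ) :
    multilinear v (restr x ∅) = v ∅ := by
  unfold multilinear restr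
  rw [Finset.sum_eq_single ∅]
  · simp
  · intro S _ hS
    obtain ⟨a, ha⟩ := Finset.nonempty_iff_ne_empty.mpr hS
    have : ∏ i ∈ S, (if i ∈ (∅ : Finset G) then x i else 0) = 0 :=
      Finset.prod_eq_zero ha (by simp)
    rw [this]; ring
  · intro h; exact absurd (Finset.mem_univ ∅) h

lemma multilinear_update {v : Finset G → ℝ} {w : G → ℝ} {a : G} (hwa : w a = 0) (u : ℝ) :
    multilinear v (Function.update w a u) = multilinear v w + u * marg a v w := by
  have hcongr : ∀ i, i ≠ a → Function.update w a u i = w i := fun i hi =>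
    Function.update_of_ne hi _ _
  rw [multilinear_affine a (Function.update w a u), multilinear_affine a w, hwa,
    Function.update_self,
    ml_congr (f := v) (fun i hi => hcongr i (Finset.ne_of_mem_erase hi)),
    marg_congr (v := v) hcongr]
  ring

end GreedyAux

open GreedyAux in
/-- the greedy choice of large items guarantees that all remaining items
have marginal value at most `V(x^{(L)})/c`, provided the selected fractional mass is
at least `c`. Here `L_t` is the image of the first `t` greedily chosen elements. -/
theorem greedy_large_items_bound {G : Type*} [Fintype G] [DecidableEq G]
    (v : Finset G → ℝ) (hnn : ∀ S, 0 ≤ v S) (hmono : Monotone v) (hsub : Submodular v)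
    (hempty : v ∅ = 0)
    (x : G → ℝ) (hx : ∀ j, 0 ≤ x j ∧ x j ≤ 1) (c : ℝ) (hc : 0 < c)
    (k : ℕ) (j : Fin k → G) (hj : Function.Injective j)
    (hgreedy : ∀ t : Fin k, ∀ j' : G,
      j' ∉ (Finset.univ.filter (fun t' : Fin k => (t' : ℕ) < (t : ℕ))).image j →
      multilinear v (restr x ((Finset.univ.filter (fun t' : Fin k => (t' : ℕ) < (t : ℕ))).image j)
          + indVec {j'})
        - multilinear v (restr x ((Finset.univ.filter (fun t' : Fin k => (t' : ℕ) < (t : ℕ))).image j))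
      ≤ multilinear v (restr x ((Finset.univ.filter (fun t' : Fin k => (t' : ℕ) < (t : ℕ))).image j)
          + indVec {j t})
        - multilinear v (restr x ((Finset.univ.filter (fun t' : Fin k => (t' : ℕ) < (t : ℕ))).image j)))
    (hmass : c ≤ ∑ t : Fin k, x (j t)) :
    ∀ j' : G, j' ∉ (Finset.univ : Finset (Fin k)).image j →
      multilinear v (restr x ((Finset.univ : Finset (Fin k)).image j) + indVec {j'})
          - multilinear v (restr x ((Finset.univ : Finset (Fin k)).image j))
        ≤ multilinear v (restr x ((Finset.univ : Finset (Fin k)).image j)) / c := by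

  intro j' hj'
  have hx0 : ∀ a, 0 ≤ x a := fun a => (hx a).1
  set Ln : ℕ → Finset G :=
    fun n => ((Finset.univ.filter (fun t' : Fin k => (t' : ℕ) < n)).image j) with hLn
  have hLnk : (Finset.univ : Finset (Fin k)).image j = Ln k := by
    rw [hLn]
    congr 1
    exact (Finset.filter_true_of_mem (fun t' _ => t'.isLt)).symm
  have hj'Ln : ∀ n, j' ∉ Ln n := by
    intro n h
    exact hj' (Finset.image_subset_image (Finset.filter_subset _ _) h)
  have hLnsub : ∀ {n m : ℕ}, n ≤ m → Ln n ⊆ Ln m := by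
    intro n m h
    apply Finset.image_subset_image
    intro t ht
    simp only [Finset.mem_filter, Finset.mem_univ, true_and] at *
    omega
  -- the quantity to bound
  set D : ℝ := marg j' v (restr x (Ln k)) with hD
  have hjnot : ∀ (n : ℕ) (hn : n < k), j ⟨n, hn⟩ ∉ Ln n := by
    intro n hn hmem
    obtain ⟨t', ht', heq⟩ := Finset.mem_image.mp hmem
    have := hj heq
    rw [Finset.mem_filter] at ht'
    rw [this] at ht'
    exact absurd ht'.2 (lt_irrefl n)
  -- the greedy marginal dominates D at every step
  have hstep : ∀ (n : ℕ) (hn : n < k),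
      D ≤ marg (j ⟨n, hn⟩) v (restr x (Ln n)) := by
    intro n hn
    have h1 : D ≤ marg j' v (restr x (Ln n)) := by
      rw [hD]
      exact marg_anti hsub j' (fun a => (restr_bounds hx (Ln n) a).1)
        (fun a => (restr_bounds hx (Ln k) a).2)
        (restr_mono hx0 (hLnsub hn.le))
    have h2 := hgreedy ⟨n, hn⟩ j' (hj'Ln n)
    have e : ((Finset.univ.filter
        (fun t' : Fin k => (t' : ℕ) < ((⟨n, hn⟩ : Fin k) : ℕ))).image j) = Ln n := rfl
    rw [e] at h2
    rw [marg_eq (restr_notMem (hj'Ln n)),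
        marg_eq (restr_notMem (hjnot n hn))] at h2
    exact h1.trans h2
  -- main induction
  have main : ∀ n : ℕ, n ≤ k →
      (∑ t ∈ Finset.univ.filter (fun t : Fin k => (t : ℕ) < n), x (j t)) * D
        ≤ multilinear v (restr x (Ln n)) := by
    intro n
    induction n with
    | zero =>
      intro _
      have hLn0 : Ln 0 = ∅ := by rw [hLn]; simp
      rw [hLn0, multilinear_restr_empty, hempty]
      have : (Finset.univ.filter (fun t : Fin k => (t : ℕ) < 0)) = ∅ := by
        ext t; simp
      rw [this]
      simp
    | succ n ih =>
      intro hn1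
      have hn : n < k := hn1
      set tn : Fin k := ⟨n, hn⟩ with htn
      have hfins : Finset.univ.filter (fun t : Fin k => (t : ℕ) < n + 1)
          = insert tn (Finset.univ.filter (fun t : Fin k => (t : ℕ) < n)) := by
        ext t
        simp only [Finset.mem_filter, Finset.mem_insert, Finset.mem_univ, true_and]
        constructor
        · intro h
          rcases Nat.lt_succ_iff_lt_or_eq.mp h with h | h
          · exact Or.inr h
          · exact Or.inl (Fin.ext h)
        · rintro (h | h)
          · rw [h]; exact Nat.lt_succ_self n
          · exact h.trans (Nat.lt_succ_self n)
      have htnnot : tn ∉ Finset.univ.filter (fun t : Fin k => (t : ℕ) < n) := by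
        simp [htn]
      have hLsucc : Ln (n + 1) = insert (j tn) (Ln n) := by
        rw [hLn]
        simp only
        rw [hfins, Finset.image_insert]
      have hVsucc : multilinear v (restr x (Ln (n + 1)))
          = multilinear v (restr x (Ln n))
            + x (j tn) * marg (j tn) v (restr x (Ln n)) := by
        rw [hLsucc, restr_insert, multilinear_update (restr_notMem (hjnot n hn))]
      have hxm : x (j tn) * D ≤ x (j tn) * marg (j tn) v (restr x (Ln n)) :=
        mul_le_mul_of_nonneg_left (hstep n hn) (hx0 (j tn))
      rw [hfins, Finset.sum_insert htnnot, hVsucc]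
      have := ih hn.le
      nlinarith [this, hxm]
  have hfinal := main k (le_refl k)
  have hsum : (∑ t ∈ Finset.univ.filter (fun t : Fin k => (t : ℕ) < k), x (j t))
      = ∑ t : Fin k, x (j t) := by
    rw [Finset.filter_true_of_mem (fun t _ => t.isLt)]
  rw [hsum] at hfinal
  have hV0 : 0 ≤ multilinear v (restr x (Ln k)) := by
    rw [multilinear_eq_ml]
    exact ml_nonneg (fun S _ => hnn S) (restr_bounds hx (Ln k))
  rw [hLnk, marg_eq (restr_notMem (hj'Ln k))]
  by_cases hDpos : D ≤ 0
  · calc D ≤ 0 := hDpos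
      _ ≤ multilinear v (restr x (Ln k)) / c := div_nonneg hV0 hc.le
  · push_neg at hDpos
    rw [le_div_iff₀ hc]
    calc D * c ≤ D * (∑ t : Fin k, x (j t)) :=
          mul_le_mul_of_nonneg_left hmass hDpos.le
      _ = (∑ t : Fin k, x (j t)) * D := mul_comm _ _
      _ ≤ multilinear v (restr x (Ln k)) := hfinal
end

section
/- Let A be a set of n agents, each with a nonnegative monotone submodular valuation v_i on a finite ground set G with v_i(∅) = 0, and let V_i be the multilinear extension of v_i. Let H ⊆ G with |H| = n, G' = G ∖ H, and A' = {i ∈ A : v_i(G') > 0}. Let (H*_i)_{i∈A} be a partition of H, let y* ∈ [0,1]^{A×G} satisfy y*_{ij} = 0 for j ∈ H and ∑_{i∈A} y*_{ij} ≤ 1 for each j ∈ G', and set x*_i = y*_i + 1_{H*_i}. Let β > 0 and let y' ∈ [0,1]^{A×G} satisfy y'_{ij} = 0 for j ∈ H, ∑_{i∈A} y'_{ij} ≤ 1 for each j ∈ G', y'_i = 0 for every i ∉ A', V_i(y'_i) > 0 for every i ∈ A', and (1/n) ∑_{i∈A'} V_i(y*_i)/V_i(y'_i) ≤ β. Then there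 exists an injection π : A → H such that (∏_{i∈A} V_i(y'_i + 1_{π(i)}))^{1/n} ≥ (1/(β+1)) · (∏_{i∈A} V_i(x*_i))^{1/n}. -/
open Finset
open scoped Classical

section Lemmas
variable {G : Type*} [Fintype G] [DecidableEq G]

lemma multilinear_nonneg_s15 (v : Finset G → ℝ) (hv : ∀ S, 0 ≤ v S)
    {x : G → ℝ} (hx : ∀ j, 0 ≤ x j ∧ x j ≤ 1) : 0 ≤ multilinear v x :=
  Finset.sum_nonneg fun S _ => mul_nonneg (hv S) (mul_nonneg
    (Finset.prod_nonneg fun j _ => (hx j).1)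
    (Finset.prod_nonneg fun j _ => by linarith [(hx j).2]))

lemma sum_split (j : G) (w : Finset G → ℝ) :
    ∑ S : Finset G, w S
      = ∑ S ∈ (Finset.univ.erase j).powerset, w S
        + ∑ S ∈ (Finset.univ.erase j).powerset, w (insert j S) := by
  rw [← Finset.sum_powerset_insert (Finset.notMem_erase j Finset.univ),
    Finset.insert_erase (Finset.mem_univ j), Finset.powerset_univ]

lemma prod_update_ne {s : Finset G} {j : G} (hj : j ∉ s) (x : G → ℝ) (t : ℝ) :
    ∏ k ∈ s, Function.update x j t k = ∏ k ∈ s, x k :=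
  Finset.prod_congr rfl fun k hk => Function.update_of_ne (ne_of_mem_of_not_mem hk hj) _ _

lemma prod_one_sub_update_ne {s : Finset G} {j : G} (hj : j ∉ s) (x : G → ℝ) (t : ℝ) :
    ∏ k ∈ s, (1 - Function.update x j t k) = ∏ k ∈ s, (1 - x k) :=
  Finset.prod_congr rfl fun k hk => by
    rw [Function.update_of_ne (ne_of_mem_of_not_mem hk hj)]

lemma prod_update_mem {s : Finset G} {j : G} (hj : j ∈ s) (x : G → ℝ) (t : ℝ) :
    ∏ k ∈ s, Function.update x j t k = t * ∏ k ∈ s.erase j, x k := by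
  rw [← Finset.mul_prod_erase _ _ hj, Function.update_self,
    prod_update_ne (Finset.notMem_erase j s)]

lemma prod_one_sub_update_mem {s : Finset G} {j : G} (hj : j ∈ s) (x : G → ℝ) (t : ℝ) :
    ∏ k ∈ s, (1 - Function.update x j t k) = (1 - t) * ∏ k ∈ s.erase j, (1 - x k) := by
  rw [← Finset.mul_prod_erase _ _ hj, Function.update_self,
    prod_one_sub_update_ne (Finset.notMem_erase j s)]

/-- pivotal decomposition: `multilinear` is affine in each coordinate. -/
lemma multilinear_update_s15 (v : Finset G → ℝ) (x : G → ℝ) (j : G) (t : ℝ) :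
    multilinear v (Function.update x j t)
      = multilinear v (Function.update x j 0)
        + t * (multilinear v (Function.update x j 1)
                - multilinear v (Function.update x j 0)) := by
  have hterm : ∀ S : Finset G,
      v S * ((∏ k ∈ S, Function.update x j t k) * ∏ k ∈ Sᶜ, (1 - Function.update x j t k))
        = v S * ((∏ k ∈ S, Function.update x j 0 k) * ∏ k ∈ Sᶜ, (1 - Function.update x j 0 k))
          + t * (v S * ((∏ k ∈ S, Function.update x j 1 k) * ∏ k ∈ Sᶜ, (1 - Function.update x j 1 k))
            - v S * ((∏ k ∈ S, Function.update x j 0 k) * ∏ k ∈ Sᶜ, (1 - Function.update x j 0 k))) := by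
    intro S
    by_cases hj : j ∈ S
    · have hjc : j ∉ Sᶜ := by simp [hj]
      rw [prod_update_mem hj, prod_update_mem hj, prod_update_mem hj,
        prod_one_sub_update_ne hjc, prod_one_sub_update_ne hjc, prod_one_sub_update_ne hjc]
      ring
    · have hjc : j ∈ Sᶜ := Finset.mem_compl.2 hj
      rw [prod_update_ne hj, prod_update_ne hj, prod_update_ne hj,
        prod_one_sub_update_mem hjc, prod_one_sub_update_mem hjc, prod_one_sub_update_mem hjc]
      ring
  unfold multilinear
  rw [← Finset.sum_sub_distrib, Finset.mul_sum, ← Finset.sum_add_distrib]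
  exact Finset.sum_congr rfl fun S _ => hterm S

/-- formula for the discrete derivative of `multilinear` in coordinate `j`. -/
lemma multilinear_marg (v : Finset G → ℝ) (x : G → ℝ) (j : G) :
    multilinear v (Function.update x j 1) - multilinear v (Function.update x j 0)
      = ∑ S ∈ (Finset.univ.erase j).powerset,
          (v (insert j S) - v S) *
            ((∏ k ∈ S, x k) * ∏ k ∈ (Finset.univ.erase j) \ S, (1 - x k)) := by
  have hcompl : ∀ S ∈ (Finset.univ.erase j).powerset,
      (insert j S)ᶜ = (Finset.univ.erase j) \ S := by
    intro S hS
    have hS' := Finset.mem_powerset.1 hS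
    ext k
    by_cases hk : k = j
    · subst hk
      simp
    · simp only [Finset.mem_compl, Finset.mem_insert, Finset.mem_sdiff, Finset.mem_erase,
        Finset.mem_univ, true_and, and_true]
      tauto
  have hjS : ∀ S ∈ (Finset.univ.erase j).powerset, j ∉ S := fun S hS hj =>
    Finset.notMem_erase j Finset.univ (Finset.mem_powerset.1 hS hj)
  unfold multilinear
  rw [sum_split j, sum_split j]
  have h10 : ∀ S ∈ (Finset.univ.erase j).powerset,
      v S * ((∏ k ∈ S, Function.update x j 1 k) * ∏ k ∈ Sᶜ, (1 - Function.update x j 1 k)) = 0 := by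
    intro S hS
    have : j ∈ Sᶜ := Finset.mem_compl.2 (hjS S hS)
    rw [prod_one_sub_update_mem this]
    simp
  have h00 : ∀ S ∈ (Finset.univ.erase j).powerset,
      v (insert j S) * ((∏ k ∈ insert j S, Function.update x j 0 k)
        * ∏ k ∈ (insert j S)ᶜ, (1 - Function.update x j 0 k)) = 0 := by
    intro S hS
    rw [prod_update_mem (Finset.mem_insert_self j S)]
    simp
  rw [Finset.sum_congr rfl h10, Finset.sum_congr rfl h00]
  simp only [Finset.sum_const_zero, zero_add, add_zero]
  rw [← Finset.sum_sub_distrib]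
  refine Finset.sum_congr rfl fun S hS => ?_
  have hj1 : j ∉ (insert j S)ᶜ := by simp
  have hj2 : j ∈ (insert j S) := Finset.mem_insert_self j S
  have hj3 : j ∈ Sᶜ := Finset.mem_compl.2 (hjS S hS)
  rw [prod_update_mem hj2, prod_one_sub_update_ne hj1, prod_update_ne (hjS S hS),
    prod_one_sub_update_mem hj3, hcompl S hS]
  have herase : (insert j S).erase j = S := Finset.erase_insert (hjS S hS)
  have herase2 : Sᶜ.erase j = (Finset.univ.erase j) \ S := by
    rw [← hcompl S hS, ← herase]
    ext k
    by_cases hk : k = j <;> simp [hk, hjS S hS]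
  rw [herase, herase2]
  ring

lemma weight_sum (x : G → ℝ) (j : G) :
    ∑ S ∈ (Finset.univ.erase j).powerset,
      (∏ k ∈ S, x k) * ∏ k ∈ (Finset.univ.erase j) \ S, (1 - x k) = 1 := by
  rw [← Finset.prod_add]
  exact Finset.prod_eq_one fun k _ => by ring

lemma marg_nonneg (v : Finset G → ℝ) (hmono : Monotone v) {x : G → ℝ}
    (hx : ∀ k, 0 ≤ x k ∧ x k ≤ 1) (j : G) :
    0 ≤ multilinear v (Function.update x j 1) - multilinear v (Function.update x j 0) := by
  rw [multilinear_marg]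
  refine Finset.sum_nonneg fun S _ => mul_nonneg
    (sub_nonneg.2 (hmono (Finset.subset_insert j S)))
    (mul_nonneg (Finset.prod_nonneg fun k _ => (hx k).1)
      (Finset.prod_nonneg fun k _ => by linarith [(hx k).2]))

lemma marg_le (v : Finset G → ℝ) (hsub : Submodular v) {x : G → ℝ}
    (hx : ∀ k, 0 ≤ x k ∧ x k ≤ 1) (j : G) :
    multilinear v (Function.update x j 1) - multilinear v (Function.update x j 0)
      ≤ v {j} - v ∅ := by
  rw [multilinear_marg]
  calc ∑ S ∈ (Finset.univ.erase j).powerset,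
        (v (insert j S) - v S) * ((∏ k ∈ S, x k) * ∏ k ∈ (Finset.univ.erase j) \ S, (1 - x k))
      ≤ ∑ S ∈ (Finset.univ.erase j).powerset,
        (v {j} - v ∅) * ((∏ k ∈ S, x k) * ∏ k ∈ (Finset.univ.erase j) \ S, (1 - x k)) := by
        refine Finset.sum_le_sum fun S hS => ?_
        have hjS : j ∉ S := fun hj =>
          Finset.notMem_erase j Finset.univ (Finset.mem_powerset.1 hS hj)
        refine mul_le_mul_of_nonneg_right ?_
          (mul_nonneg (Finset.prod_nonneg fun k _ => (hx k).1)
            (Finset.prod_nonneg fun k _ => by linarith [(hx k).2]))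
        have h := hsub S {j}
        have h1 : S ∩ {j} = ∅ := by
          ext k; simp only [Finset.mem_inter, Finset.mem_singleton, Finset.notMem_empty,
            iff_false, not_and]
          rintro hk rfl; exact hjS hk
        have h2 : S ∪ {j} = insert j S := by rw [Finset.union_comm]; rfl
        rw [h1, h2] at h
        linarith
    _ = v {j} - v ∅ := by rw [← Finset.mul_sum, weight_sum, mul_one]

lemma multilinear_le_update (v : Finset G → ℝ) (hmono : Monotone v) {x : G → ℝ}
    (hx : ∀ k, 0 ≤ x k ∧ x k ≤ 1) (j : G) {t : ℝ} (ht : x j ≤ t) :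
    multilinear v x ≤ multilinear v (Function.update x j t) := by
  have h := marg_nonneg v hmono hx j
  calc multilinear v x = multilinear v (Function.update x j (x j)) := by
        rw [Function.update_eq_self]
    _ ≤ multilinear v (Function.update x j t) := by
        rw [multilinear_update_s15 v x j (x j), multilinear_update_s15 v x j t]
        nlinarith

lemma multilinear_mono_aux (v : Finset G → ℝ) (hmono : Monotone v) (s : Finset G) :
    ∀ x y : G → ℝ, (∀ j, 0 ≤ x j ∧ x j ≤ 1) → (∀ j, 0 ≤ y j ∧ y j ≤ 1) →
      (∀ j, x j ≤ y j) → (∀ j, j ∉ s → x j = y j) →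
      multilinear v x ≤ multilinear v y := by
  induction s using Finset.induction_on with
  | empty =>
    intro x y _ _ _ h
    rw [funext fun j => h j (Finset.notMem_empty j)]
  | @insert a s ha ih =>
    intro x y hx hy hxy hagree
    set x' := Function.update x a (y a) with hx'def
    have hx' : ∀ j, 0 ≤ x' j ∧ x' j ≤ 1 := by
      intro j
      by_cases h : j = a
      · subst h; simp only [hx'def, Function.update_self]; exact hy j
      · simp only [hx'def, Function.update_of_ne h]; exact hx j
    have step : multilinear v x ≤ multilinear v x' :=
      multilinear_le_update v hmono hx a (hxy a)
    refine step.trans (ih x' y hx' hy ?_ ?_)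
    · intro j
      by_cases h : j = a
      · subst h; simp [hx'def]
      · simp only [hx'def, Function.update_of_ne h]; exact hxy j
    · intro j hj
      by_cases h : j = a
      · subst h; simp [hx'def]
      · simp only [hx'def, Function.update_of_ne h]
        exact hagree j (by simp [h, hj])

lemma multilinear_mono (v : Finset G → ℝ) (hmono : Monotone v) {x y : G → ℝ}
    (hx : ∀ j, 0 ≤ x j ∧ x j ≤ 1) (hy : ∀ j, 0 ≤ y j ∧ y j ≤ 1)
    (hxy : ∀ j, x j ≤ y j) : multilinear v x ≤ multilinear v y :=
  multilinear_mono_aux v hmono Finset.univ x y hx hy hxy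
    (fun j hj => absurd (Finset.mem_univ j) hj)

lemma multilinear_indVec (v : Finset G → ℝ) (S : Finset G) :
    multilinear v (indVec S) = v S := by
  unfold multilinear
  rw [Finset.sum_eq_single S]
  · have h1 : ∏ j ∈ S, indVec S j = 1 :=
      Finset.prod_eq_one fun j hj => by simp [indVec, hj]
    have h2 : ∏ j ∈ Sᶜ, (1 - indVec S j) = 1 :=
      Finset.prod_eq_one fun j hj => by simp [indVec, Finset.mem_compl.1 hj]
    rw [h1, h2]; ring
  · intro T _ hTS
    by_cases hsub : T ⊆ S
    · have hss : T ⊂ S := ⟨hsub, fun h => hTS (Finset.Subset.antisymm hsub h)⟩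
      obtain ⟨j, hjS, hjT⟩ := Finset.exists_of_ssubset hss
      have : (1 - indVec S j) = 0 := by simp [indVec, hjS]
      rw [Finset.prod_eq_zero (Finset.mem_compl.2 hjT) this]
      ring
    · obtain ⟨j, hjT, hjS⟩ := Finset.not_subset.1 hsub
      have : indVec S j = 0 := by simp [indVec, hjS]
      rw [Finset.prod_eq_zero hjT this]
      ring
  · intro h; exact absurd (Finset.mem_univ S) h

lemma multilinear_add_indVec_le (v : Finset G → ℝ) (hsub : Submodular v) (S : Finset G) :
    ∀ x : G → ℝ, (∀ j, 0 ≤ x j ∧ x j ≤ 1) → (∀ k ∈ S, x k = 0) →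
      multilinear v (x + indVec S) ≤ multilinear v x + ∑ k ∈ S, (v {k} - v ∅) := by
  induction S using Finset.induction_on with
  | empty =>
    intro x _ _
    have : x + indVec (∅ : Finset G) = x := by
      funext j; simp [indVec]
    rw [this]; simp
  | @insert a S ha ih =>
    intro x hx hzero
    set z := x + indVec S with hzdef
    have hzx : ∀ j, 0 ≤ z j ∧ z j ≤ 1 := by
      intro j
      by_cases h : j ∈ S
      · have : x j = 0 := hzero j (Finset.mem_insert_of_mem h)
        simp [hzdef, indVec, h, Pi.add_apply, this]
      · simp only [hzdef, Pi.add_apply, indVec, h, if_neg, if_false, add_zero]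
        exact hx j
    have hza : z a = 0 := by
      have hxa : x a = 0 := hzero a (Finset.mem_insert_self a S)
      simp [hzdef, indVec, ha, hxa]
    have heq : x + indVec (insert a S) = Function.update z a 1 := by
      funext j
      by_cases h : j = a
      · rw [h]
        simp [Function.update_self, hzdef, indVec, ha, hzero a (Finset.mem_insert_self a S)]
      · simp only [Function.update_of_ne h, hzdef, Pi.add_apply, indVec,
          Finset.mem_insert]
        simp [h]
    have hupd0 : Function.update z a 0 = z := by
      rw [← hza, Function.update_eq_self]
    have hmarg := marg_le v hsub hzx a
    rw [hupd0] at hmarg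
    have hih := ih x hx (fun k hk => hzero k (Finset.mem_insert_of_mem hk))
    rw [heq, Finset.sum_insert ha]
    rw [← hzdef] at hih
    linarith

end Lemmas

/-- matching extension: if the fractional solution `y'` approximates `y*`
in the sense `(1/n) ∑_{i∈A'} V_i(y*_i)/V_i(y'_i) ≤ β`, then there exists a matching
`π : A → H` with `(∏_i V_i(y'_i + 1_{π(i)}))^{1/n} ≥ (∏_i V_i(x*_i))^{1/n} / (β+1)`. -/
theorem matching_extension {A G : Type*} [Fintype A] [Fintype G] [DecidableEq A]
    [DecidableEq G] (v : A → Finset G → ℝ)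
    (hnn : ∀ i S, 0 ≤ v i S) (hmono : ∀ i, Monotone (v i)) (hsub : ∀ i, Submodular (v i))
    (hempty : ∀ i, v i ∅ = 0)
    (H : Finset G) (hH : H.card = Fintype.card A)
    (Hstar : A → Finset G)
    (hdisj : ∀ i i', i ≠ i' → Disjoint (Hstar i) (Hstar i'))
    (hcover : Finset.univ.biUnion Hstar = H)
    (ystar : A → G → ℝ) (hystar01 : ∀ i j, 0 ≤ ystar i j ∧ ystar i j ≤ 1)
    (hystarH : ∀ i, ∀ j ∈ H, ystar i j = 0)
    (hystarfeas : ∀ j ∉ H, ∑ i : A, ystar i j ≤ 1)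
    (β : ℝ) (hβ : 0 < β)
    (y' : A → G → ℝ) (hy'01 : ∀ i j, 0 ≤ y' i j ∧ y' i j ≤ 1)
    (hy'H : ∀ i, ∀ j ∈ H, y' i j = 0)
    (hy'feas : ∀ j ∉ H, ∑ i : A, y' i j ≤ 1)
    (hy'zero : ∀ i, ¬ 0 < v i Hᶜ → y' i = 0)
    (hy'pos : ∀ i, 0 < v i Hᶜ → 0 < multilinear (v i) (y' i))
    (hratio : (1 / (Fintype.card A : ℝ)) *
        ∑ i ∈ Finset.univ.filter (fun i => 0 < v i Hᶜ),
          multilinear (v i) (ystar i) / multilinear (v i) (y' i) ≤ β) :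
    ∃ π : A → G, Function.Injective π ∧ (∀ i, π i ∈ H) ∧
      (∏ i : A, multilinear (v i) (y' i + indVec {π i})) ^ ((1 : ℝ) / Fintype.card A)
        ≥ (1 / (β + 1)) *
          (∏ i : A, multilinear (v i) (ystar i + indVec (Hstar i))) ^ ((1 : ℝ) / Fintype.card A) := by
  classical
  -- trivial case: no agents
  by_cases hA0 : Fintype.card A = 0
  · haveI hE : IsEmpty A := Fintype.card_eq_zero_iff.mp hA0
    refine ⟨fun i => (hE.false i).elim, fun i => (hE.false i).elim,
      fun i => (hE.false i).elim, ?_⟩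
    rw [Finset.univ_eq_empty, Finset.prod_empty, Finset.prod_empty, Real.one_rpow, mul_one]
    rw [ge_iff_le, div_le_one (by linarith)]
    linarith
  have hn : 0 < (Fintype.card A : ℝ) := by
    exact_mod_cast Nat.pos_of_ne_zero hA0
  -- abbreviations
  set f : A → G → ℝ := fun i j => multilinear (v i) (y' i + indVec {j}) with hfdef
  set Vs : A → ℝ := fun i => multilinear (v i) (ystar i + indVec (Hstar i)) with hVsdef
  set bi : A → ℝ := fun i =>
    if 0 < v i Hᶜ then multilinear (v i) (ystar i) / multilinear (v i) (y' i) else 0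
    with hbidef
  set d : A → ℝ := fun i => bi i + (Hstar i).card with hddef
  set c : A → ℝ := fun i => Vs i / d i with hcdef
  -- basic facts
  have hHstarH : ∀ i, Hstar i ⊆ H := by
    intro i
    rw [← hcover]
    intro k hk
    exact Finset.mem_biUnion.2 ⟨i, Finset.mem_univ i, hk⟩
  have hHne : H.Nonempty := by
    rw [← Finset.card_pos, hH]
    exact Nat.pos_of_ne_zero hA0
  -- bounds on the relevant points of the cube
  have hy'ind01 : ∀ i, ∀ j ∈ H, ∀ k, 0 ≤ (y' i + indVec {j}) k ∧ (y' i + indVec {j}) k ≤ 1 := by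
    intro i j hj k
    by_cases hk : k = j
    · subst hk
      simp [indVec, hy'H i k hj]
    · simp only [Pi.add_apply, indVec, Finset.mem_singleton, hk, if_false, add_zero]
      exact hy'01 i k
  have hfnn : ∀ i, ∀ j ∈ H, 0 ≤ f i j := by
    intro i j hj
    exact multilinear_nonneg_s15 (v i) (hnn i) (hy'ind01 i j hj)
  have hystarSt01 : ∀ i, ∀ k, 0 ≤ (ystar i + indVec (Hstar i)) k ∧
      (ystar i + indVec (Hstar i)) k ≤ 1 := by
    intro i k
    by_cases hk : k ∈ Hstar i
    · simp [indVec, hk, hystarH i k (hHstarH i hk)]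
    · simp only [Pi.add_apply, indVec, hk, if_false, add_zero]
      exact hystar01 i k
  have hVsnn : ∀ i, 0 ≤ Vs i := fun i =>
    multilinear_nonneg_s15 (v i) (hnn i) (hystarSt01 i)
  have hbinn : ∀ i, 0 ≤ bi i := by
    intro i
    simp only [hbidef]
    split_ifs with h
    · exact div_nonneg (multilinear_nonneg_s15 (v i) (hnn i) (hystar01 i)) (hy'pos i h).le
    · exact le_rfl
  have hdnn : ∀ i, 0 ≤ d i := fun i =>
    add_nonneg (hbinn i) (Nat.cast_nonneg _)
  have hcnn : ∀ i, 0 ≤ c i := fun i => div_nonneg (hVsnn i) (hdnn i)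
  -- the key pointwise inequality
  have key : ∀ i, ∀ j ∈ H, Vs i ≤ bi i * f i j + ∑ k ∈ Hstar i, f i k := by
    intro i j hj
    have h1 : Vs i ≤ multilinear (v i) (ystar i) + ∑ k ∈ Hstar i, (v i {k} - v i ∅) :=
      multilinear_add_indVec_le (v i) (hsub i) (Hstar i) (ystar i) (hystar01 i)
        (fun k hk => hystarH i k (hHstarH i hk))
    have h2 : ∀ k ∈ Hstar i, v i {k} - v i ∅ ≤ f i k := by
      intro k hk
      rw [hempty i, sub_zero]
      have : v i {k} = multilinear (v i) (indVec {k}) := (multilinear_indVec (v i) {k}).symm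
      rw [this]
      refine multilinear_mono (v i) (hmono i) ?_ (hy'ind01 i k (hHstarH i hk)) ?_
      · intro m
        by_cases hm : m ∈ ({k} : Finset G) <;> simp [indVec, hm]
      · intro m
        simp only [Pi.add_apply]
        have := (hy'01 i m).1
        linarith [le_refl (indVec ({k} : Finset G) m)]
    have h3 : multilinear (v i) (ystar i) ≤ bi i * f i j := by
      by_cases hA' : 0 < v i Hᶜ
      · have hpos := hy'pos i hA'
        have hbieq : bi i = multilinear (v i) (ystar i) / multilinear (v i) (y' i) := by
          simp [hbidef, hA']
        have hfy' : multilinear (v i) (y' i) ≤ f i j := by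
          refine multilinear_mono (v i) (hmono i) (hy'01 i) (hy'ind01 i j hj) ?_
          intro m
          simp only [Pi.add_apply]
          have : (0:ℝ) ≤ indVec ({j} : Finset G) m := by
            by_cases hm : m ∈ ({j} : Finset G) <;> simp [indVec, hm]
          linarith
        have : bi i * multilinear (v i) (y' i) = multilinear (v i) (ystar i) := by
          rw [hbieq, div_mul_cancel₀ _ (ne_of_gt hpos)]
        calc multilinear (v i) (ystar i) = bi i * multilinear (v i) (y' i) := this.symm
          _ ≤ bi i * f i j := mul_le_mul_of_nonneg_left hfy' (hbinn i)
      · have hbieq : bi i = 0 := by simp [hbidef, hA']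
        have hvle : v i Hᶜ ≤ 0 := le_of_not_gt hA'
        have : multilinear (v i) (ystar i) ≤ multilinear (v i) (indVec Hᶜ) := by
          refine multilinear_mono (v i) (hmono i) (hystar01 i) ?_ ?_
          · intro m
            by_cases hm : m ∈ Hᶜ <;> simp [indVec, hm]
          · intro m
            by_cases hm : m ∈ H
            · simp [indVec, hm, hystarH i m hm]
            · simp [indVec, Finset.mem_compl.2 hm, (hystar01 i m).2]
        rw [multilinear_indVec] at this
        rw [hbieq, zero_mul]
        linarith
    have h4 : ∑ k ∈ Hstar i, (v i {k} - v i ∅) ≤ ∑ k ∈ Hstar i, f i k :=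
      Finset.sum_le_sum h2
    linarith
  -- dichotomy used for Hall's condition
  have dich : ∀ i, (¬ ∃ k ∈ Hstar i, c i ≤ f i k) → ∀ j ∈ H, c i ≤ f i j := by
    intro i hno j hj
    push_neg at hno
    by_cases hd : d i = 0
    · have : c i = 0 := by simp [hcdef, hd]
      rw [this]
      exact hfnn i j hj
    · have hd' : 0 < d i := lt_of_le_of_ne (hdnn i) (Ne.symm hd)
      by_cases hc : c i ≤ 0
      · exact hc.trans (hfnn i j hj)
      push_neg at hc
      have hX : c i * d i = Vs i := div_mul_cancel₀ _ hd
      have hsum : ∑ k ∈ Hstar i, f i k ≤ (Hstar i).card * c i := by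
        calc ∑ k ∈ Hstar i, f i k ≤ ∑ k ∈ Hstar i, c i :=
              Finset.sum_le_sum fun k hk => (hno k hk).le
          _ = (Hstar i).card * c i := by
              rw [Finset.sum_const, nsmul_eq_mul]
      have hkey := key i j hj
      by_cases hb : bi i = 0
      · exfalso
        have hcard : (0:ℝ) < (Hstar i).card := by
          have : d i = (Hstar i).card := by rw [hddef]; simp [hb]
          linarith [hd', this]
        have hne : (Hstar i).Nonempty := by
          rw [← Finset.card_pos]
          exact_mod_cast hcard
        have hstrict : ∑ k ∈ Hstar i, f i k < ∑ k ∈ Hstar i, c i :=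
          Finset.sum_lt_sum_of_nonempty hne fun k hk => hno k hk
        rw [Finset.sum_const, nsmul_eq_mul] at hstrict
        have hdc : d i = (Hstar i).card := by rw [hddef]; simp [hb]
        rw [hb, zero_mul, zero_add] at hkey
        rw [hdc] at hX
        linarith [hkey, hstrict, hX]
      · have hb' : 0 < bi i := lt_of_le_of_ne (hbinn i) (Ne.symm hb)
        have hdexp : d i = bi i + ((Hstar i).card : ℝ) := by rw [hddef]
        have hXX : Vs i = bi i * c i + ((Hstar i).card : ℝ) * c i := by
          rw [← hX, hdexp]; ring
        have hfin : bi i * c i ≤ bi i * f i j := by linarith [hkey, hsum, hXX]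
        exact (mul_le_mul_iff_right₀ hb').mp hfin
  -- Hall's theorem
  set t : A → Finset G := fun i => H.filter (fun j => c i ≤ f i j) with htdef
  have hall : ∀ s : Finset A, s.card ≤ (s.biUnion t).card := by
    intro s
    by_cases hcase : ∀ i ∈ s, ∃ k ∈ Hstar i, c i ≤ f i k
    · have hne : Nonempty G := ⟨hHne.choose⟩
      set g : A → G := fun i =>
        if h : ∃ k ∈ Hstar i, c i ≤ f i k then h.choose else Classical.arbitrary G with hgdef
      have hg : ∀ i ∈ s, g i ∈ Hstar i ∧ c i ≤ f i (g i) := by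
        intro i hi
        have h := hcase i hi
        have hgi : g i = h.choose := by simp only [hgdef]; exact dif_pos h
        rw [hgi]
        exact h.choose_spec
      refine Finset.card_le_card_of_injOn g ?_ ?_
      · intro i hi
        refine Finset.mem_biUnion.2 ⟨i, hi, ?_⟩
        rw [htdef]
        exact Finset.mem_filter.2 ⟨hHstarH i (hg i hi).1, (hg i hi).2⟩
      · intro i hi i' hi' hgg
        by_contra hii
        exact Finset.disjoint_left.1 (hdisj i i' hii) (hg i hi).1 (hgg ▸ (hg i' hi').1)
    · push_neg at hcase
      obtain ⟨i0, hi0s, hi0⟩ := hcase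
      have hHsub : H ⊆ s.biUnion t := by
        intro j hj
        refine Finset.mem_biUnion.2 ⟨i0, hi0s, ?_⟩
        rw [htdef]
        refine Finset.mem_filter.2 ⟨hj, ?_⟩
        refine dich i0 ?_ j hj
        rintro ⟨k, hk1, hk2⟩
        exact absurd hk2 (not_le.2 (hi0 k hk1))
      calc s.card ≤ Fintype.card A := Finset.card_le_univ s
        _ = H.card := hH.symm
        _ ≤ (s.biUnion t).card := Finset.card_le_card hHsub
  obtain ⟨π, hπinj, hπmem⟩ := (Finset.all_card_le_biUnion_card_iff_exists_injective t).1 hall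
  have hπH : ∀ i, π i ∈ H := fun i => (Finset.mem_filter.1 (hπmem i)).1
  have hπf : ∀ i, c i ≤ f i (π i) := fun i => (Finset.mem_filter.1 (hπmem i)).2
  refine ⟨π, hπinj, hπH, ?_⟩
  -- final computation
  set w : ℝ := (1 : ℝ) / (Fintype.card A : ℝ) with hwdef
  have hwnn : 0 ≤ w := by positivity
  -- sum of d is at most n (β+1)
  have hsumcard : ∑ i : A, ((Hstar i).card : ℝ) = (Fintype.card A : ℝ) := by
    have h : (Finset.univ.biUnion Hstar).card = ∑ i : A, (Hstar i).card := by
      apply Finset.card_biUnion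
      intro x _ y _ hxy
      exact hdisj x y hxy
    rw [hcover, hH] at h
    exact_mod_cast h.symm
  have hsumbi : ∑ i : A, bi i ≤ (Fintype.card A : ℝ) * β := by
    have heq : ∑ i : A, bi i = ∑ i ∈ Finset.univ.filter (fun i => 0 < v i Hᶜ),
        multilinear (v i) (ystar i) / multilinear (v i) (y' i) := by
      rw [Finset.sum_filter]
    rw [heq]
    have := mul_le_mul_of_nonneg_left hratio hn.le
    calc ∑ i ∈ Finset.univ.filter (fun i => 0 < v i Hᶜ),
          multilinear (v i) (ystar i) / multilinear (v i) (y' i)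
        = (Fintype.card A : ℝ) * ((1 / (Fintype.card A : ℝ)) * ∑ i ∈ Finset.univ.filter (fun i => 0 < v i Hᶜ),
            multilinear (v i) (ystar i) / multilinear (v i) (y' i)) := by
          field_simp
      _ ≤ (Fintype.card A : ℝ) * β := this
  have hsumd : ∑ i : A, d i ≤ (Fintype.card A : ℝ) * (β + 1) := by
    have : ∑ i : A, d i = ∑ i : A, bi i + ∑ i : A, ((Hstar i).card : ℝ) := by
      rw [← Finset.sum_add_distrib]
    rw [this, hsumcard]
    nlinarith
  -- per-agent: Vs i ≤ c i * d i
  have hVscd : ∀ i, Vs i ≤ c i * d i := by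
    intro i
    by_cases hd : d i = 0
    · have hdexp : d i = bi i + ((Hstar i).card : ℝ) := by rw [hddef]
      have hd0 : bi i + ((Hstar i).card : ℝ) = 0 := by rw [← hdexp]; exact hd
      have h1 := hbinn i
      have h2 : (0:ℝ) ≤ ((Hstar i).card : ℝ) := Nat.cast_nonneg _
      have hb0 : bi i = 0 := by linarith
      have hcardR : ((Hstar i).card : ℝ) = 0 := by linarith
      have hcard : (Hstar i).card = 0 := by exact_mod_cast hcardR
      have hemp : Hstar i = ∅ := Finset.card_eq_zero.1 hcard
      obtain ⟨j0, hj0⟩ := hHne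
      have hk := key i j0 hj0
      rw [hb0, zero_mul, hemp, Finset.sum_empty, zero_add] at hk
      rw [hd, mul_zero]
      exact hk
    · have : c i * d i = Vs i := by rw [hcdef]; exact div_mul_cancel₀ _ hd
      rw [this]
  -- assemble the final chain of inequalities
  have hprodVs : ∏ i : A, Vs i ≤ ∏ i : A, (c i * d i) :=
    Finset.prod_le_prod (fun i _ => hVsnn i) (fun i _ => hVscd i)
  have hprodcd : ∏ i : A, (c i * d i) = (∏ i : A, c i) * ∏ i : A, d i :=
    Finset.prod_mul_distrib
  have hcP : ∏ i : A, c i ≤ ∏ i : A, f i (π i) :=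
    Finset.prod_le_prod (fun i _ => hcnn i) (fun i _ => hπf i)
  have hPnn : 0 ≤ ∏ i : A, f i (π i) :=
    Finset.prod_nonneg fun i _ => hfnn i (π i) (hπH i)
  have hcnnP : 0 ≤ ∏ i : A, c i := Finset.prod_nonneg fun i _ => hcnn i
  have hdnnP : 0 ≤ ∏ i : A, d i := Finset.prod_nonneg fun i _ => hdnn i
  have hDw : (∏ i : A, d i) ^ w ≤ β + 1 := by
    have h1 : (∏ i : A, d i) ^ w = ∏ i : A, d i ^ w :=
      (Real.finset_prod_rpow Finset.univ d (fun i _ => hdnn i) w).symm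
    have hwsum : ∑ _i : A, w = 1 := by
      rw [Finset.sum_const, Finset.card_univ, nsmul_eq_mul, hwdef, mul_one_div,
        div_self (ne_of_gt hn)]
    have h2 : ∏ i : A, d i ^ w ≤ ∑ i : A, w * d i :=
      Real.geom_mean_le_arith_mean_weighted Finset.univ (fun _ => w) d
        (fun i _ => hwnn) hwsum (fun i _ => hdnn i)
    have h3 : ∑ i : A, w * d i = w * ∑ i : A, d i := by rw [← Finset.mul_sum]
    have h4 : w * ∑ i : A, d i ≤ w * ((Fintype.card A : ℝ) * (β + 1)) :=
      mul_le_mul_of_nonneg_left hsumd hwnn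
    have h5 : w * ((Fintype.card A : ℝ) * (β + 1)) = β + 1 := by
      rw [hwdef]
      field_simp
    calc (∏ i : A, d i) ^ w = ∏ i : A, d i ^ w := h1
      _ ≤ ∑ i : A, w * d i := h2
      _ = w * ∑ i : A, d i := h3
      _ ≤ w * ((Fintype.card A : ℝ) * (β + 1)) := h4
      _ = β + 1 := h5
  have hXw : (∏ i : A, Vs i) ^ w ≤ ((∏ i : A, c i) * ∏ i : A, d i) ^ w := by
    refine Real.rpow_le_rpow (Finset.prod_nonneg fun i _ => hVsnn i) ?_ hwnn
    rw [← hprodcd]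
    exact hprodVs
  have hmulw : ((∏ i : A, c i) * ∏ i : A, d i) ^ w
      = (∏ i : A, c i) ^ w * (∏ i : A, d i) ^ w := Real.mul_rpow hcnnP hdnnP
  have hcw : (∏ i : A, c i) ^ w ≤ (∏ i : A, f i (π i)) ^ w :=
    Real.rpow_le_rpow hcnnP hcP hwnn
  have final : (∏ i : A, Vs i) ^ w ≤ (∏ i : A, f i (π i)) ^ w * (β + 1) := by
    calc (∏ i : A, Vs i) ^ w ≤ (∏ i : A, c i) ^ w * (∏ i : A, d i) ^ w := by
          rw [← hmulw]; exact hXw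
      _ ≤ (∏ i : A, f i (π i)) ^ w * (β + 1) :=
          mul_le_mul hcw hDw (Real.rpow_nonneg hdnnP w) (Real.rpow_nonneg hPnn w)
  have final2 : (1 / (β + 1)) * (∏ i : A, Vs i) ^ w ≤ (∏ i : A, f i (π i)) ^ w := by
    calc (1 / (β + 1)) * (∏ i : A, Vs i) ^ w
        ≤ (1 / (β + 1)) * ((∏ i : A, f i (π i)) ^ w * (β + 1)) :=
          mul_le_mul_of_nonneg_left final (by positivity)
      _ = (∏ i : A, f i (π i)) ^ w := by field_simp
  rw [ge_iff_le]
  exact final2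
end
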